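/- arXiv:2111.12312 — 7 statements merged into one kernel-verified Lean document; each statement's English description precedes it below -/
import Mathlib

section
/- For i = 1,2, let (X_i,𝒳_i) and (Y_i,𝒴_i) be measurable spaces with measurable distortion functions ρ_i: X_i×Y_i → [0,∞], and let μ_i be a σ-finite measure on (X_i,𝒳_i) that is ρ_i-subregular of dimension m_i ∈ (0,∞) with subregularity constants c_i ∈ (0,∞) and δ_i ∈ (0,∞]. Define the distortion function ρ̄((x₁,x₂),(y₁,y₂)) = ρ₁(x₁,y₁) + ρ₂(x₂,y₂) on the product spaces. Then the product measure μ̄ = μ₁ ⊗ μ₂ satisfies μ̄(B_{ρ̄}(y,δ)) ≤ c₁·c₂·[Γ(1+m₁)·Γ(1+m₂)/Γ(1+m₁+m₂)]·δ^{m₁+m₂} for all y ∈ Y₁×Y₂ and all δ ∈ (0, min(δ₁,δ₂)). -/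
open MeasureTheory
open scoped ENNReal

lemma betaReal {a b : ℝ} (ha : 0 < a) (hb : 0 < b) :
    ∫ x in (0:ℝ)..1, x ^ (a - 1) * (1 - x) ^ (b - 1) =
      Real.Gamma a * Real.Gamma b / Real.Gamma (a + b) := by
  have hG : Real.Gamma (a + b) ≠ 0 := (Real.Gamma_pos_of_pos (by linarith)).ne'
  have key := Complex.Gamma_mul_Gamma_eq_betaIntegral (s := (a:ℂ)) (t := (b:ℂ))
    (by simpa using ha) (by simpa using hb)
  have hbeta : Complex.betaIntegral a b =
      ((∫ x in (0:ℝ)..1, x ^ (a - 1) * (1 - x) ^ (b - 1) : ℝ) : ℂ) := by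
    rw [Complex.betaIntegral, ← intervalIntegral.integral_ofReal]
    apply intervalIntegral.integral_congr
    intro x hx
    rw [Set.uIcc_of_le (zero_le_one), Set.mem_Icc] at hx
    simp only []
    rw [Complex.ofReal_mul, Complex.ofReal_cpow hx.1,
      Complex.ofReal_cpow (by linarith [hx.2] : (0:ℝ) ≤ 1 - x)]
    push_cast
    ring
  rw [hbeta, ← Complex.ofReal_add, Complex.Gamma_ofReal, Complex.Gamma_ofReal,
    Complex.Gamma_ofReal, ← Complex.ofReal_mul, ← Complex.ofReal_mul] at key
  have := Complex.ofReal_injective key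
  field_simp
  linarith [this]

lemma key_integral {m₁ m₂ c₁ c₂ δ : ℝ} (hm₁ : 0 < m₁) (hm₂ : 0 < m₂)
    (hc₁ : 0 < c₁) (hc₂ : 0 < c₂) (hδ : 0 < δ)
    (hbeta : ∫ x in (0:ℝ)..1, x ^ (m₂ - 1) * (1 - x) ^ ((m₁ + 1) - 1) =
      Real.Gamma m₂ * Real.Gamma (m₁ + 1) / Real.Gamma (m₂ + (m₁ + 1))) :
    ∫ t in Set.Ioi (0:ℝ), c₁ * max (δ - (t / c₂) ^ m₂⁻¹) 0 ^ m₁ =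
      c₁ * c₂ * (Real.Gamma (1 + m₁) * Real.Gamma (1 + m₂) / Real.Gamma (1 + m₁ + m₂)) *
        δ ^ (m₁ + m₂) := by
  set F : ℝ → ℝ := fun x => (m₂ * x ^ (m₂ - 1)) • (c₁ * max (δ - x) 0 ^ m₁) with hF
  have h1 : ∫ t in Set.Ioi (0:ℝ), c₁ * max (δ - (t / c₂) ^ m₂⁻¹) 0 ^ m₁
      = c₂ • ∫ u in Set.Ioi (0:ℝ), c₁ * max (δ - u ^ m₂⁻¹) 0 ^ m₁ := by
    have h := integral_comp_mul_left_Ioi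
      (fun u => c₁ * max (δ - u ^ m₂⁻¹) 0 ^ m₁) 0 (inv_pos.mpr hc₂)
    simp only [mul_zero, inv_inv] at h
    simp_rw [div_eq_inv_mul]
    exact h
  have h2 : ∫ u in Set.Ioi (0:ℝ), c₁ * max (δ - u ^ m₂⁻¹) 0 ^ m₁
      = ∫ x in Set.Ioi (0:ℝ), F x := by
    rw [← integral_comp_rpow_Ioi_of_pos
      (g := fun u => c₁ * max (δ - u ^ m₂⁻¹) 0 ^ m₁) hm₂]
    apply setIntegral_congr_fun measurableSet_Ioi
    intro x hx
    have hxp : (x ^ m₂) ^ m₂⁻¹ = x := by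
      rw [← Real.rpow_mul (le_of_lt hx), mul_inv_cancel₀ hm₂.ne', Real.rpow_one]
    simp only [hF, hxp]
  have mF : Measurable F := by
    have m1 : Measurable fun x : ℝ => x ^ (m₂ - 1) :=
      measurable_of_continuousOn_compl_singleton 0 (fun x hx =>
        (Real.continuousAt_rpow_const x _ (Or.inl hx)).continuousWithinAt)
    have m2 : Continuous fun x : ℝ => c₁ * max (δ - x) 0 ^ m₁ :=
      continuous_const.mul ((Real.continuous_rpow_const hm₁.le).comp
        ((continuous_const.sub continuous_id).max continuous_const))
    exact (measurable_const.mul m1).smul m2.measurable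
  have hF0 : Set.EqOn F 0 (Set.Ioi δ) := by
    intro x hx
    have : max (δ - x) 0 = 0 := max_eq_right (by simp at hx; linarith)
    simp [hF, this, Real.zero_rpow hm₁.ne']
  have hFi : IntegrableOn F (Set.Ioc 0 δ) := by
    have hdom : IntegrableOn (fun x : ℝ => (m₂ * x ^ (m₂ - 1)) * (c₁ * δ ^ m₁))
        (Set.Ioc 0 δ) := by
      have : IntervalIntegrable (fun x : ℝ => x ^ (m₂ - 1)) volume 0 δ :=
        intervalIntegral.intervalIntegrable_rpow' (by linarith)
      rw [intervalIntegrable_iff_integrableOn_Ioc_of_le hδ.le] at this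
      simpa [IntegrableOn, mul_assoc, mul_comm, mul_left_comm] using
        (this.const_mul m₂).mul_const (c₁ * δ ^ m₁)
    apply hdom.mono' mF.aestronglyMeasurable
    rw [ae_restrict_iff' measurableSet_Ioc]
    filter_upwards with x hx
    have hx1 : (0:ℝ) ≤ x ^ (m₂ - 1) := Real.rpow_nonneg hx.1.le _
    have hmaxnn : (0:ℝ) ≤ max (δ - x) 0 := le_max_right _ _
    have hb : max (δ - x) 0 ^ m₁ ≤ δ ^ m₁ :=
      Real.rpow_le_rpow hmaxnn (max_le (by linarith [hx.1]) hδ.le) hm₁.le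
    have hFnn : 0 ≤ F x := by
      simp only [hF, smul_eq_mul]
      positivity
    rw [Real.norm_eq_abs, abs_of_nonneg hFnn]
    simp only [hF, smul_eq_mul]
    have : (0:ℝ) ≤ m₂ * x ^ (m₂ - 1) := by positivity
    exact mul_le_mul_of_nonneg_left (mul_le_mul_of_nonneg_left hb hc₁.le) this
  have h3 : ∫ x in Set.Ioi (0:ℝ), F x = ∫ x in Set.Ioc 0 δ, F x := by
    rw [← Set.Ioc_union_Ioi_eq_Ioi hδ.le,
      setIntegral_union (Set.Ioc_disjoint_Ioi le_rfl) measurableSet_Ioi hFi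
        ((integrableOn_congr_fun hF0 measurableSet_Ioi).mpr (integrableOn_zero))]
    rw [setIntegral_congr_fun measurableSet_Ioi hF0]
    simp
  have h4 : ∫ x in Set.Ioc 0 δ, F x = δ • ∫ v in (0:ℝ)..1, F (v * δ) := by
    rw [← intervalIntegral.integral_of_le hδ.le,
      intervalIntegral.integral_comp_mul_right F hδ.ne', smul_smul,
      mul_inv_cancel₀ hδ.ne', one_smul, zero_mul, one_mul]
  have h5 : ∫ v in (0:ℝ)..1, F (v * δ)
      = (m₂ * c₁ * (δ ^ (m₂ - 1) * δ ^ m₁)) *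
        ∫ v in (0:ℝ)..1, v ^ (m₂ - 1) * (1 - v) ^ ((m₁ + 1) - 1) := by
    rw [← intervalIntegral.integral_const_mul]
    apply intervalIntegral.integral_congr
    intro v hv
    rw [Set.uIcc_of_le zero_le_one, Set.mem_Icc] at hv
    have h1v : (0:ℝ) ≤ 1 - v := by linarith [hv.2]
    have hmax : max (δ - v * δ) 0 = (1 - v) * δ := by
      rw [max_eq_left (by nlinarith [hv.2])]; ring
    simp only [hF, smul_eq_mul, hmax, add_sub_cancel_right]
    rw [Real.mul_rpow hv.1 hδ.le, Real.mul_rpow h1v hδ.le]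
    ring
  rw [h1, h2, h3, h4, h5, hbeta]
  have hδpow : δ * (δ ^ (m₂ - 1) * δ ^ m₁) = δ ^ (m₁ + m₂) := by
    have e1 : δ ^ (m₂ - 1) * δ ^ m₁ = δ ^ (m₂ - 1 + m₁) := (Real.rpow_add hδ _ _).symm
    calc δ * (δ ^ (m₂ - 1) * δ ^ m₁) = δ ^ (1:ℝ) * δ ^ (m₂ - 1 + m₁) := by
          rw [e1, Real.rpow_one]
      _ = δ ^ (1 + (m₂ - 1 + m₁)) := (Real.rpow_add hδ _ _).symm
      _ = δ ^ (m₁ + m₂) := by ring_nf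
  have hg2 : Real.Gamma (1 + m₂) = m₂ * Real.Gamma m₂ := by
    rw [add_comm, Real.Gamma_add_one hm₂.ne']
  have hg1 : Real.Gamma (1 + m₁) = Real.Gamma (m₁ + 1) := by rw [add_comm]
  have hg12 : Real.Gamma (1 + m₁ + m₂) = Real.Gamma (m₂ + (m₁ + 1)) := by ring_nf
  have hGne : Real.Gamma (m₂ + (m₁ + 1)) ≠ 0 :=
    (Real.Gamma_pos_of_pos (by linarith)).ne'
  rw [hg1, hg2, hg12, smul_eq_mul, smul_eq_mul, ← hδpow]
  field_simp

/-- If `μᵢ` is σ-finite and `ρᵢ`-subregular of dimension `mᵢ` with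
constants `cᵢ, δᵢ` (i = 1,2), then the product measure `μ₁ ⊗ μ₂` satisfies the
subregularity condition for the sum distortion `ρ̄((x₁,x₂),(y₁,y₂)) = ρ₁(x₁,y₁) + ρ₂(x₂,y₂)`
with dimension `m₁+m₂`, constant `c₁·c₂·Γ(1+m₁)·Γ(1+m₂)/Γ(1+m₁+m₂)`, and radius
threshold `min δ₁ δ₂`. -/
theorem subregular_prod_two
    {X₁ Y₁ X₂ Y₂ : Type*} [MeasurableSpace X₁] [MeasurableSpace Y₁]
    [MeasurableSpace X₂] [MeasurableSpace Y₂]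
    (ρ₁ : X₁ → Y₁ → ℝ≥0∞) (ρ₂ : X₂ → Y₂ → ℝ≥0∞)
    (hρ₁ : Measurable (Function.uncurry ρ₁)) (hρ₂ : Measurable (Function.uncurry ρ₂))
    (μ₁ : Measure X₁) (μ₂ : Measure X₂) [SigmaFinite μ₁] [SigmaFinite μ₂]
    (m₁ m₂ c₁ c₂ : ℝ) (δ₁ δ₂ : ℝ≥0∞)
    (hm₁ : 0 < m₁) (hm₂ : 0 < m₂) (hc₁ : 0 < c₁) (hc₂ : 0 < c₂)
    (hδ₁ : 0 < δ₁) (hδ₂ : 0 < δ₂)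
    (hsub₁ : ∀ y : Y₁, ∀ δ : ℝ, 0 < δ → ENNReal.ofReal δ < δ₁ →
      μ₁ {x | ρ₁ x y < ENNReal.ofReal δ} ≤ ENNReal.ofReal (c₁ * δ ^ m₁))
    (hsub₂ : ∀ y : Y₂, ∀ δ : ℝ, 0 < δ → ENNReal.ofReal δ < δ₂ →
      μ₂ {x | ρ₂ x y < ENNReal.ofReal δ} ≤ ENNReal.ofReal (c₂ * δ ^ m₂)) :
    ∀ y : Y₁ × Y₂, ∀ δ : ℝ, 0 < δ → ENNReal.ofReal δ < min δ₁ δ₂ →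
      (μ₁.prod μ₂) {x : X₁ × X₂ | ρ₁ x.1 y.1 + ρ₂ x.2 y.2 < ENNReal.ofReal δ} ≤
        ENNReal.ofReal (c₁ * c₂ *
          (Real.Gamma (1 + m₁) * Real.Gamma (1 + m₂) / Real.Gamma (1 + m₁ + m₂)) *
          δ ^ (m₁ + m₂)) := by
  intro y δ hδ hδm
  set δ' := ENNReal.ofReal δ with hδ'def
  have hδ'₁ : δ' < δ₁ := lt_of_lt_of_le hδm (min_le_left _ _)
  have hδ'₂ : δ' < δ₂ := lt_of_lt_of_le hδm (min_le_right _ _)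
  have mρ1 : Measurable fun x : X₁ => ρ₁ x y.1 :=
    hρ₁.comp (measurable_id.prodMk measurable_const)
  have mρ2 : Measurable fun x : X₂ => ρ₂ x y.2 :=
    hρ₂.comp (measurable_id.prodMk measurable_const)
  have hBmeas : MeasurableSet {x : X₁ × X₂ | ρ₁ x.1 y.1 + ρ₂ x.2 y.2 < δ'} :=
    ((mρ1.comp measurable_fst).add (mρ2.comp measurable_snd)) measurableSet_Iio
  set f : X₁ → ℝ := fun x => c₂ * ((δ' - ρ₁ x y.1).toReal) ^ m₂ with hf
  have hfnn : ∀ x, 0 ≤ f x := fun x =>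
    mul_nonneg hc₂.le (Real.rpow_nonneg ENNReal.toReal_nonneg _)
  have mf : Measurable f :=
    measurable_const.mul ((Real.continuous_rpow_const hm₂.le).measurable.comp
      (ENNReal.measurable_toReal.comp (measurable_const.sub mρ1)))
  set h : ℝ → ℝ := fun t => c₁ * max (δ - (t / c₂) ^ m₂⁻¹) 0 ^ m₁ with hh
  have hcont : Continuous h :=
    continuous_const.mul ((Real.continuous_rpow_const hm₁.le).comp
      (((continuous_const.sub ((Real.continuous_rpow_const
        (inv_nonneg.mpr hm₂.le)).comp (continuous_id.div_const c₂)))).max continuous_const))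
  have hhnn : ∀ t, 0 ≤ h t := fun t =>
    mul_nonneg hc₁.le (Real.rpow_nonneg (le_max_right _ _) _)
  set T : ℝ := c₂ * δ ^ m₂ with hT
  have hTpos : 0 < T := mul_pos hc₂ (Real.rpow_pos_of_pos hδ _)
  have hzero : Set.EqOn h 0 (Set.Ioi T) := by
    intro t ht
    simp only [Set.mem_Ioi] at ht
    have h1 : δ ^ m₂ < t / c₂ := (lt_div_iff₀ hc₂).mpr (by rw [mul_comm]; linarith [ht])
    have h2 : δ < (t / c₂) ^ m₂⁻¹ := by
      have := Real.rpow_lt_rpow (Real.rpow_nonneg hδ.le m₂) h1 (inv_pos.mpr hm₂)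
      rwa [← Real.rpow_mul hδ.le, mul_inv_cancel₀ hm₂.ne', Real.rpow_one] at this
    have : max (δ - (t / c₂) ^ m₂⁻¹) 0 = 0 := max_eq_right (by linarith)
    simp [hh, this, Real.zero_rpow hm₁.ne']
  have hint : IntegrableOn h (Set.Ioi 0) := by
    rw [← Set.Ioc_union_Ioi_eq_Ioi hTpos.le]
    exact (hcont.integrableOn_Ioc).union
      ((integrableOn_congr_fun hzero measurableSet_Ioi).mpr integrableOn_zero)
  -- section bound
  have section_bound : ∀ x₁ : X₁,
      μ₂ {x₂ | ρ₁ x₁ y.1 + ρ₂ x₂ y.2 < δ'} ≤ ENNReal.ofReal (f x₁) := by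
    intro x₁
    by_cases hr : ρ₁ x₁ y.1 < δ'
    · have hne : δ' - ρ₁ x₁ y.1 ≠ ∞ :=
        ne_top_of_le_ne_top ENNReal.ofReal_ne_top tsub_le_self
      have hspos : 0 < (δ' - ρ₁ x₁ y.1).toReal :=
        ENNReal.toReal_pos (tsub_pos_of_lt hr).ne' hne
      have hofs : ENNReal.ofReal ((δ' - ρ₁ x₁ y.1).toReal) = δ' - ρ₁ x₁ y.1 :=
        ENNReal.ofReal_toReal hne
      refine le_trans (measure_mono ?_) (hsub₂ y.2 _ hspos ?_)
      · intro x₂ hx₂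
        simp only [Set.mem_setOf_eq] at hx₂ ⊢
        rw [hofs]
        exact (ENNReal.cancel_of_ne hr.ne_top).lt_tsub_iff_left.mpr hx₂
      · rw [hofs]; exact lt_of_le_of_lt tsub_le_self hδ'₂
    · have hempty : {x₂ | ρ₁ x₁ y.1 + ρ₂ x₂ y.2 < δ'} = (∅ : Set X₂) := by
        ext x₂
        simp only [Set.mem_setOf_eq, Set.mem_empty_iff_false, iff_false, not_lt]
        exact le_trans (not_lt.mp hr) le_self_add
      rw [hempty]
      simp
  -- tail bound
  have tail_bound : ∀ t ∈ Set.Ioi (0:ℝ),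
      μ₁ {x | t < f x} ≤ ENNReal.ofReal (h t) := by
    intro t ht
    simp only [Set.mem_Ioi] at ht
    set s : ℝ := (t / c₂) ^ m₂⁻¹ with hs
    have hspos : 0 < s := Real.rpow_pos_of_pos (div_pos ht hc₂) _
    have hsubset : {x : X₁ | t < f x} ⊆ {x : X₁ | ρ₁ x y.1 < δ' - ENNReal.ofReal s} := by
      intro x hx
      simp only [Set.mem_setOf_eq, hf] at hx ⊢
      set u : ℝ := (δ' - ρ₁ x y.1).toReal with hu
      have hunn : 0 ≤ u := ENNReal.toReal_nonneg
      have h1 : t / c₂ < u ^ m₂ := (div_lt_iff₀ hc₂).mpr (by rw [mul_comm]; exact hx)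
      have h2 : s < u := by
        have := Real.rpow_lt_rpow (div_pos ht hc₂).le h1 (inv_pos.mpr hm₂)
        rwa [← Real.rpow_mul hunn, mul_inv_cancel₀ hm₂.ne', Real.rpow_one] at this
      have hne : δ' - ρ₁ x y.1 ≠ ∞ :=
        ne_top_of_le_ne_top ENNReal.ofReal_ne_top tsub_le_self
      have h3 : ENNReal.ofReal s < δ' - ρ₁ x y.1 := by
        rw [ENNReal.ofReal_lt_iff_lt_toReal hspos.le hne]
        exact h2
      have hrlt : ρ₁ x y.1 < δ' := by
        by_contra hcon
        rw [tsub_eq_zero_of_le (not_lt.mp hcon)] at h3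
        simp at h3
      have h4 : ENNReal.ofReal s + ρ₁ x y.1 < δ' :=
        (ENNReal.cancel_of_ne hrlt.ne_top).lt_tsub_iff_right.mp h3
      exact (ENNReal.cancel_of_ne ENNReal.ofReal_ne_top).lt_tsub_iff_left.mpr h4
    by_cases hsδ : s < δ
    · have heq : δ' - ENNReal.ofReal s = ENNReal.ofReal (δ - s) :=
        (ENNReal.ofReal_sub δ hspos.le).symm
      refine le_trans (measure_mono hsubset) ?_
      rw [heq]
      refine le_trans (hsub₁ y.1 (δ - s) (by linarith) ?_) ?_
      · exact lt_of_le_of_lt (ENNReal.ofReal_le_ofReal (by linarith)) hδ'₁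
      · have hmx : max (δ - s) 0 = δ - s := max_eq_left (by linarith)
        simp only [hh, ← hs, hmx]
        exact le_refl _
    · have hzero' : δ' - ENNReal.ofReal s = 0 :=
        tsub_eq_zero_of_le (ENNReal.ofReal_le_ofReal (not_lt.mp hsδ))
      refine le_trans (measure_mono hsubset) ?_
      rw [hzero']
      have : {x : X₁ | ρ₁ x y.1 < 0} = (∅ : Set X₁) := by ext x; simp
      rw [this]
      simp
  calc (μ₁.prod μ₂) {x : X₁ × X₂ | ρ₁ x.1 y.1 + ρ₂ x.2 y.2 < δ'}
      = ∫⁻ x₁, μ₂ {x₂ | ρ₁ x₁ y.1 + ρ₂ x₂ y.2 < δ'} ∂μ₁ := by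
        rw [Measure.prod_apply hBmeas]
        rfl
    _ ≤ ∫⁻ x₁, ENNReal.ofReal (f x₁) ∂μ₁ := lintegral_mono section_bound
    _ = ∫⁻ t in Set.Ioi 0, μ₁ {x | t < f x} :=
        lintegral_eq_lintegral_meas_lt μ₁ (Filter.Eventually.of_forall hfnn) mf.aemeasurable
    _ ≤ ∫⁻ t in Set.Ioi 0, ENNReal.ofReal (h t) :=
        setLIntegral_mono (ENNReal.measurable_ofReal.comp hcont.measurable) tail_bound
    _ = ENNReal.ofReal (∫ t in Set.Ioi 0, h t) :=
        (ofReal_integral_eq_lintegral_ofReal hint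
          (Filter.Eventually.of_forall hhnn)).symm
    _ = ENNReal.ofReal (c₁ * c₂ *
          (Real.Gamma (1 + m₁) * Real.Gamma (1 + m₂) / Real.Gamma (1 + m₁ + m₂)) *
          δ ^ (m₁ + m₂)) := by
        rw [hh]
        rw [key_integral hm₁ hm₂ hc₁ hc₂ hδ (betaReal hm₂ (by linarith))]
end

section
/- Fix k ∈ (0,∞). For i = 1,…,ℓ, let (X_i,𝒳_i) and (Y_i,𝒴_i) be measurable spaces with measurable distortion functions ρ_i: X_i×Y_i → [0,∞], let α_i ∈ (0,∞), and define the weighted distortion function ρ_{(ℓ)}((x₁,…,x_ℓ),(y₁,…,y_ℓ)) = Σ_{i=1}^ℓ α_i·ρ_i(x_i,y_i). Suppose that for each i, μ_i is a σ-finite measure on (X_i,𝒳_i) that is ρ_i^{1/k}-subregular of dimension m_i ∈ (0,∞) with subregularity constants c_i ∈ (0,∞) and δ_i ∈ (0,∞]. Then the product measure μ^{(ℓ)} = μ₁ ⊗ ⋯ ⊗ μ_ℓ satisfies μ^{(ℓ)}(B_{ρ_{(ℓ)}^{1/k}}(y^{(ℓ)},δ)) ≤ c_{(ℓ)}·δ^{m_{(ℓ)}}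 for all y^{(ℓ)} ∈ Y₁×⋯×Y_ℓ and δ ∈ (0,δ_{(ℓ)}), where m_{(ℓ)} = Σ_{i=1}^ℓ m_i, c_{(ℓ)} = [∏_{i=1}^ℓ Γ(1+m_i/k) / Γ(1+Σ_{i=1}^ℓ m_i/k)]·∏_{i=1}^ℓ c_i·α_i^{-m_i/k}, and δ_{(ℓ)} = min{α₁^{1/k}δ₁,…,α_ℓ^{1/k}δ_ℓ}. -/
open MeasureTheory
open scoped ENNReal

open Set

lemma real_beta_scaled {p q s : ℝ} (hp : 0 < p) (hq : 0 < q) (hs : 0 < s) :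
    ∫ u in (0:ℝ)..s, u ^ (p - 1) * (s - u) ^ (q - 1) =
      s ^ (p + q - 1) * (Real.Gamma p * Real.Gamma q / Real.Gamma (p + q)) := by
  have hΓ : Real.Gamma (p + q) ≠ 0 := (Real.Gamma_pos_of_pos (by linarith)).ne'
  have hbeta : Complex.betaIntegral p q =
      ((Real.Gamma p * Real.Gamma q / Real.Gamma (p + q) : ℝ) : ℂ) := by
    have h := Complex.Gamma_mul_Gamma_eq_betaIntegral
      (s := (p : ℂ)) (t := (q : ℂ)) (by simpa using hp) (by simpa using hq)
    have hpq : ((p : ℂ) + q) = ((p + q : ℝ) : ℂ) := by push_cast; ring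
    rw [hpq, Complex.Gamma_ofReal, Complex.Gamma_ofReal, Complex.Gamma_ofReal] at h
    have hΓ' : ((Real.Gamma (p + q) : ℝ) : ℂ) ≠ 0 := by exact_mod_cast hΓ
    push_cast
    rw [eq_div_iff hΓ']
    linear_combination h.symm
  have hscaled := Complex.betaIntegral_scaled (p : ℂ) (q : ℂ) hs
  have hLHS : (∫ x in (0:ℝ)..s, (x : ℂ) ^ ((p : ℂ) - 1) * ((s : ℂ) - x) ^ ((q : ℂ) - 1)) =
      ((∫ u in (0:ℝ)..s, u ^ (p - 1) * (s - u) ^ (q - 1) : ℝ) : ℂ) := by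
    rw [← intervalIntegral.integral_ofReal]
    refine intervalIntegral.integral_congr fun x hx => ?_
    rw [Set.uIcc_of_le hs.le] at hx
    rw [show ((p:ℂ) - 1) = ((p - 1 : ℝ) : ℂ) by push_cast; ring,
      show ((q:ℂ) - 1) = ((q - 1 : ℝ) : ℂ) by push_cast; ring,
      show ((s:ℂ) - (x:ℂ)) = ((s - x : ℝ) : ℂ) by push_cast; ring,
      ← Complex.ofReal_cpow hx.1 (p - 1),
      ← Complex.ofReal_cpow (by linarith [hx.2] : (0:ℝ) ≤ s - x) (q - 1),
      ← Complex.ofReal_mul]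
  have hRHS : ((s : ℂ) ^ ((p : ℂ) + q - 1)) = ((s ^ (p + q - 1) : ℝ) : ℂ) := by
    rw [show ((p:ℂ) + q - 1) = ((p + q - 1 : ℝ) : ℂ) by push_cast; ring,
      ← Complex.ofReal_cpow hs.le]
  rw [hLHS, hRHS, hbeta, ← Complex.ofReal_mul] at hscaled
  exact_mod_cast hscaled

lemma lintegral_rpow_Ioo {b r : ℝ} (hb : 0 < b) (hr : 0 ≤ r) :
    ∫⁻ u in Set.Ioo (0:ℝ) r, ENNReal.ofReal (b * u ^ (b - 1)) = ENNReal.ofReal (r ^ b) := by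
  have hint : IntervalIntegrable (fun u : ℝ => b * u ^ (b - 1)) volume 0 r :=
    (intervalIntegral.intervalIntegrable_rpow' (by linarith)).const_mul b
  have hIoc : IntegrableOn (fun u : ℝ => b * u ^ (b - 1)) (Ioc 0 r) volume := by
    simpa [intervalIntegrable_iff, Set.uIoc_of_le hr] using hint
  rw [Measure.restrict_congr_set Ioo_ae_eq_Ioc,
    ← ofReal_integral_eq_lintegral_ofReal hIoc ?nn]
  case nn =>
    filter_upwards [ae_restrict_mem measurableSet_Ioc] with u hu
    have := Real.rpow_nonneg hu.1.le (b - 1)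
    positivity
  congr 1
  rw [← intervalIntegral.integral_of_le hr, intervalIntegral.integral_const_mul,
    integral_rpow (Or.inl (by linarith))]
  rw [sub_add_cancel, Real.zero_rpow hb.ne']
  field_simp
  rw [sub_zero]

lemma conv_step' {A B : Type*} [MeasurableSpace A] [MeasurableSpace B]
    (μ : Measure A) (ν : Measure B) [SigmaFinite μ] [SigmaFinite ν]
    {f : A → ℝ≥0∞} {g : B → ℝ≥0∞} (hf : Measurable f) (hg : Measurable g)
    {a b Ca Cb s : ℝ} (ha : 0 < a) (hb : 0 < b) (hCa : 0 ≤ Ca) (hCb : 0 ≤ Cb) (hs : 0 < s)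
    (hμ : ∀ r : ℝ, 0 < r → r ≤ s → μ {x | f x < ENNReal.ofReal r} ≤ ENNReal.ofReal (Ca * r ^ a))
    (hν : ∀ r : ℝ, 0 < r → r ≤ s → ν {y | g y < ENNReal.ofReal r} ≤ ENNReal.ofReal (Cb * r ^ b)) :
    (μ.prod ν) {p : A × B | f p.1 + g p.2 < ENNReal.ofReal s} ≤
      ENNReal.ofReal (Real.Gamma (1 + a) * Real.Gamma (1 + b) / Real.Gamma (1 + a + b) *
        (Ca * Cb) * s ^ (a + b)) := by
  have hmeasS : MeasurableSet {p : A × B | f p.1 + g p.2 < ENNReal.ofReal s} :=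
    measurableSet_lt ((hf.comp measurable_fst).add (hg.comp measurable_snd)) measurable_const
  set F : A → ℝ := fun x => (min (f x) (ENNReal.ofReal s)).toReal with hFdef
  have hFm : Measurable F := (hf.min measurable_const).ennreal_toReal
  have hF0 : ∀ x, 0 ≤ F x := fun x => ENNReal.toReal_nonneg
  have hFs : ∀ x, F x ≤ s := fun x => by
    calc (min (f x) (ENNReal.ofReal s)).toReal
        ≤ (ENNReal.ofReal s).toReal :=
          ENNReal.toReal_mono ENNReal.ofReal_ne_top (min_le_right _ _)
      _ = s := ENNReal.toReal_ofReal hs.le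
  have hFiff : ∀ x, ∀ r : ℝ, r ≤ s → (F x < r ↔ f x < ENNReal.ofReal r) := by
    intro x r hrs
    have hmin : min (f x) (ENNReal.ofReal s) ≠ ∞ :=
      ne_top_of_le_ne_top ENNReal.ofReal_ne_top (min_le_right _ _)
    show (min (f x) (ENNReal.ofReal s)).toReal < r ↔ _
    rw [← ENNReal.lt_ofReal_iff_toReal_lt hmin, min_lt_iff]
    have hn : ¬ (ENNReal.ofReal s < ENNReal.ofReal r) := not_lt.mpr (ENNReal.ofReal_le_ofReal hrs)
    tauto
  have hsub1 : ∀ x : A, Prod.mk x ⁻¹' {p : A × B | f p.1 + g p.2 < ENNReal.ofReal s}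
      = {y | g y < ENNReal.ofReal s - f x} := by
    intro x; ext y; simp only [Set.mem_preimage, Set.mem_setOf_eq]
    rw [lt_tsub_iff_left]
  have hpoint : ∀ x, ν {y | g y < ENNReal.ofReal s - f x}
      ≤ ENNReal.ofReal Cb * ENNReal.ofReal ((s - F x) ^ b) := by
    intro x
    rcases lt_or_ge (f x) (ENNReal.ofReal s) with hx | hx
    · have hFx : F x < s := (hFiff x s le_rfl).mpr hx
      have hfx : f x = ENNReal.ofReal (F x) := by
        show _ = ENNReal.ofReal (min (f x) (ENNReal.ofReal s)).toReal
        rw [min_eq_left hx.le, ENNReal.ofReal_toReal (ne_top_of_lt hx)]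
      have hsF : ENNReal.ofReal s - f x = ENNReal.ofReal (s - F x) := by
        rw [hfx, ← ENNReal.ofReal_sub s (hF0 x)]
      rw [hsF]
      calc ν {y | g y < ENNReal.ofReal (s - F x)}
          ≤ ENNReal.ofReal (Cb * (s - F x) ^ b) :=
            hν _ (by linarith) (by linarith [hF0 x])
        _ = _ := ENNReal.ofReal_mul hCb
    · have h0 : ENNReal.ofReal s - f x = 0 := tsub_eq_zero_of_le hx
      rw [h0]
      have hempty : {y : B | g y < (0:ℝ≥0∞)} = ∅ := by ext y; simp
      rw [hempty]
      simp
  set D : Set (A × ℝ) := {p | F p.1 + p.2 < s} with hDdef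
  have hD : MeasurableSet D :=
    measurableSet_lt ((hFm.comp measurable_fst).add measurable_snd) measurable_const
  set G : A → ℝ → ℝ≥0∞ :=
    fun x u => ENNReal.ofReal (b * u ^ (b - 1)) * D.indicator (fun _ => (1:ℝ≥0∞)) (x, u)
    with hGdef
  have hGm : Measurable (Function.uncurry G) := by
    have h1 : Measurable (fun p : A × ℝ => ENNReal.ofReal (b * p.2 ^ (b - 1))) := by fun_prop
    have h2 : Measurable (fun p : A × ℝ => D.indicator (fun _ => (1:ℝ≥0∞)) p) :=
      measurable_const.indicator hD
    have : Function.uncurry G = fun p : A × ℝ =>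
        ENNReal.ofReal (b * p.2 ^ (b - 1)) * D.indicator (fun _ => (1:ℝ≥0∞)) p := by
      funext p
      simp only [Function.uncurry, hGdef]
    rw [this]
    exact h1.mul h2
  have hA : ∀ x, ENNReal.ofReal ((s - F x) ^ b) = ∫⁻ u in Set.Ioo (0:ℝ) s, G x u := by
    intro x
    have hGx : ∀ u, G x u
        = (Set.Iio (s - F x)).indicator (fun u => ENNReal.ofReal (b * u ^ (b - 1))) u := by
      intro u
      simp only [hGdef, hDdef, Set.indicator_apply, Set.mem_setOf_eq, Set.mem_Iio]
      by_cases h : u < s - F x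
      · rw [if_pos (by linarith), if_pos h, mul_one]
      · rw [if_neg (fun hc => h (by linarith)), if_neg h, mul_zero]
    simp_rw [hGx]
    rw [lintegral_indicator measurableSet_Iio, Measure.restrict_restrict measurableSet_Iio]
    have hset : Set.Iio (s - F x) ∩ Set.Ioo 0 s = Set.Ioo 0 (s - F x) := by
      ext u
      simp only [Set.mem_inter_iff, Set.mem_Iio, Set.mem_Ioo]
      constructor
      · rintro ⟨h1, h2, h3⟩; exact ⟨h2, h1⟩
      · rintro ⟨h1, h2⟩; exact ⟨h2, h1, by linarith [hF0 x]⟩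
    rw [hset, lintegral_rpow_Ioo hb (by linarith [hFs x])]
  have hswap : ∫⁻ x, ENNReal.ofReal ((s - F x) ^ b) ∂μ
      = ∫⁻ u in Set.Ioo (0:ℝ) s, ENNReal.ofReal (b * u ^ (b - 1)) * μ {x | F x + u < s} := by
    calc ∫⁻ x, ENNReal.ofReal ((s - F x) ^ b) ∂μ
        = ∫⁻ x, (∫⁻ u in Set.Ioo (0:ℝ) s, G x u) ∂μ := lintegral_congr hA
      _ = ∫⁻ u in Set.Ioo (0:ℝ) s, ∫⁻ x, G x u ∂μ :=
          lintegral_lintegral_swap hGm.aemeasurable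
      _ = _ := by
          refine lintegral_congr fun u => ?_
          have hGxu : ∀ x, G x u
              = ENNReal.ofReal (b * u ^ (b - 1)) *
                ({x : A | F x + u < s}).indicator (fun _ => (1:ℝ≥0∞)) x := by
            intro x
            simp only [hGdef, hDdef, Set.indicator_apply, Set.mem_setOf_eq]
          simp_rw [hGxu]
          rw [lintegral_const_mul _ (measurable_const.indicator
            (show MeasurableSet {x : A | F x + u < s} from
              measurableSet_lt (hFm.add measurable_const) measurable_const))]
          have hone : (∫⁻ x, ({x : A | F x + u < s}).indicator (fun _ => (1:ℝ≥0∞)) x ∂μ)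
              = μ {x : A | F x + u < s} := by
            rw [lintegral_indicator (show MeasurableSet {x : A | F x + u < s} from
              measurableSet_lt (hFm.add measurable_const) measurable_const)]
            simp
          rw [hone]
  have hbound : ∫⁻ u in Set.Ioo (0:ℝ) s, ENNReal.ofReal (b * u ^ (b - 1)) * μ {x | F x + u < s}
      ≤ ∫⁻ u in Set.Ioo (0:ℝ) s,
          ENNReal.ofReal (b * Ca * (u ^ (b - 1) * (s - u) ^ a)) := by
    refine lintegral_mono_ae ?_
    filter_upwards [ae_restrict_mem measurableSet_Ioo] with u hu
    have hsetEq : {x : A | F x + u < s} = {x : A | f x < ENNReal.ofReal (s - u)} := by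
      ext x
      simp only [Set.mem_setOf_eq]
      rw [← hFiff x (s - u) (by linarith [hu.1])]
      constructor <;> intro h <;> linarith
    have h1 : 0 ≤ u ^ (b - 1) := Real.rpow_nonneg hu.1.le _
    calc ENNReal.ofReal (b * u ^ (b - 1)) * μ {x | F x + u < s}
        ≤ ENNReal.ofReal (b * u ^ (b - 1)) * ENNReal.ofReal (Ca * (s - u) ^ a) := by
          rw [hsetEq]
          exact mul_le_mul_right (hμ (s - u) (by linarith [hu.2]) (by linarith [hu.1])) _
      _ = ENNReal.ofReal (b * Ca * (u ^ (b - 1) * (s - u) ^ a)) := by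
          rw [← ENNReal.ofReal_mul (by positivity)]
          congr 1
          ring
  have hval : ∫⁻ u in Set.Ioo (0:ℝ) s, ENNReal.ofReal (b * Ca * (u ^ (b - 1) * (s - u) ^ a))
      = ENNReal.ofReal (b * Ca * (s ^ (b + (a + 1) - 1) *
          (Real.Gamma b * Real.Gamma (a + 1) / Real.Gamma (b + (a + 1))))) := by
    have hmaj : IntegrableOn (fun u : ℝ => (b * Ca * s ^ a) * u ^ (b - 1)) (Set.Ioc 0 s) volume := by
      have hii : IntervalIntegrable (fun u : ℝ => (b * Ca * s ^ a) * u ^ (b - 1)) volume 0 s :=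
        (intervalIntegral.intervalIntegrable_rpow' (by linarith)).const_mul _
      simpa [intervalIntegrable_iff, Set.uIoc_of_le hs.le] using hii
    have hint : IntegrableOn (fun u : ℝ => b * Ca * (u ^ (b - 1) * (s - u) ^ a))
        (Set.Ioc 0 s) volume := by
      refine hmaj.mono' ?_ ?_
      · apply Measurable.aestronglyMeasurable
        fun_prop
      · filter_upwards [ae_restrict_mem measurableSet_Ioc] with u hu
        have h1 : 0 ≤ u ^ (b - 1) := Real.rpow_nonneg hu.1.le _
        have h2 : (s - u) ^ a ≤ s ^ a :=
          Real.rpow_le_rpow (by linarith [hu.2]) (by linarith [hu.1]) ha.le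
        have h3 : 0 ≤ (s - u) ^ a := Real.rpow_nonneg (by linarith [hu.2]) _
        rw [Real.norm_eq_abs, abs_of_nonneg (by positivity)]
        nlinarith [mul_le_mul_of_nonneg_left (mul_le_mul_of_nonneg_left h2 h1)
          (by positivity : (0:ℝ) ≤ b * Ca)]
    rw [Measure.restrict_congr_set Ioo_ae_eq_Ioc,
      ← ofReal_integral_eq_lintegral_ofReal hint ?nn2]
    case nn2 =>
      filter_upwards [ae_restrict_mem measurableSet_Ioc] with u hu
      have h1 : 0 ≤ u ^ (b - 1) := Real.rpow_nonneg hu.1.le _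
      have h3 : 0 ≤ (s - u) ^ a := Real.rpow_nonneg (by linarith [hu.2]) _
      positivity
    congr 1
    rw [← intervalIntegral.integral_of_le hs.le, intervalIntegral.integral_const_mul]
    congr 1
    have hbeta := real_beta_scaled (p := b) (q := a + 1) hb (by linarith) hs
    simp only [add_sub_cancel_right] at hbeta
    exact hbeta
  calc (μ.prod ν) {p : A × B | f p.1 + g p.2 < ENNReal.ofReal s}
      = ∫⁻ x, ν (Prod.mk x ⁻¹' {p : A × B | f p.1 + g p.2 < ENNReal.ofReal s}) ∂μ :=
        Measure.prod_apply hmeasS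
    _ ≤ ∫⁻ x, ENNReal.ofReal Cb * ENNReal.ofReal ((s - F x) ^ b) ∂μ := by
        refine lintegral_mono fun x => ?_
        rw [hsub1 x]
        exact hpoint x
    _ = ENNReal.ofReal Cb * ∫⁻ x, ENNReal.ofReal ((s - F x) ^ b) ∂μ :=
        lintegral_const_mul _ (by fun_prop)
    _ ≤ ENNReal.ofReal Cb * ENNReal.ofReal (b * Ca * (s ^ (b + (a + 1) - 1) *
          (Real.Gamma b * Real.Gamma (a + 1) / Real.Gamma (b + (a + 1))))) := by
        rw [hswap]
        exact mul_le_mul_right (hbound.trans_eq hval) _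
    _ = _ := by
        rw [← ENNReal.ofReal_mul hCb]
        congr 1
        rw [show (1:ℝ) + a + b = b + (a + 1) by ring, show (1:ℝ) + a = a + 1 by ring,
          show (1:ℝ) + b = b + 1 by ring, Real.Gamma_add_one hb.ne',
          show b + (a + 1) - 1 = a + b by ring]
        ring
universe u

lemma abstract_pi_base {X : Fin 1 → Type u} [∀ i, MeasurableSpace (X i)]
    (μ : ∀ i, Measure (X i)) [∀ i, SigmaFinite (μ i)]
    (f : ∀ i, X i → ℝ≥0∞) (hf : ∀ i, Measurable (f i))
    (a C : Fin 1 → ℝ) (d : Fin 1 → ℝ≥0∞) (ha : ∀ i, 0 < a i) (hC : ∀ i, 0 < C i)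
    (hsub : ∀ i, ∀ s : ℝ, 0 < s → ENNReal.ofReal s < d i →
      μ i {x | f i x < ENNReal.ofReal s} ≤ ENNReal.ofReal (C i * s ^ a i))
    (s : ℝ) (hs : 0 < s) (hsd : ∀ i, ENNReal.ofReal s < d i) :
    Measure.pi μ {x | ∑ i, f i (x i) < ENNReal.ofReal s} ≤
      ENNReal.ofReal ((∏ i, Real.Gamma (1 + a i)) / Real.Gamma (1 + ∑ i, a i) *
        (∏ i, C i) * s ^ (∑ i, a i)) := by
  have hd0 : (default : Fin 1) = 0 := rfl
  have hmeas : MeasurableSet {t : X default | f default t < ENNReal.ofReal s} :=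
    measurableSet_lt (hf default) measurable_const
  have hpre : {x : ∀ i, X i | ∑ i, f i (x i) < ENNReal.ofReal s}
      = (MeasurableEquiv.piUnique X) ⁻¹'
        {t : X default | f default t < ENNReal.ofReal s} := by
    ext x
    simp only [Set.mem_preimage, Set.mem_setOf_eq, Fin.sum_univ_one,
      MeasurableEquiv.piUnique_apply]
    rfl
  rw [hpre, (measurePreserving_piUnique μ).measure_preimage hmeas.nullMeasurableSet]
  calc (μ default) {t | f default t < ENNReal.ofReal s}
      ≤ ENNReal.ofReal (C default * s ^ a default) := hsub default s hs (hsd default)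
    _ = _ := by
        congr 1
        rw [Fin.prod_univ_one, Fin.sum_univ_one, Fin.prod_univ_one, hd0,
          div_self (Real.Gamma_pos_of_pos (by linarith [ha 0])).ne']
        ring


lemma abstract_pi (n : ℕ) : ∀ {X : Fin (n+1) → Type u} [∀ i, MeasurableSpace (X i)]
    (μ : ∀ i, Measure (X i)) [∀ i, SigmaFinite (μ i)]
    (f : ∀ i, X i → ℝ≥0∞), (∀ i, Measurable (f i)) →
    ∀ (a C : Fin (n+1) → ℝ) (d : Fin (n+1) → ℝ≥0∞), (∀ i, 0 < a i) → (∀ i, 0 < C i) →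
    (∀ i, ∀ s : ℝ, 0 < s → ENNReal.ofReal s < d i →
      μ i {x | f i x < ENNReal.ofReal s} ≤ ENNReal.ofReal (C i * s ^ a i)) →
    ∀ s : ℝ, 0 < s → (∀ i, ENNReal.ofReal s < d i) →
    Measure.pi μ {x | ∑ i, f i (x i) < ENNReal.ofReal s} ≤
      ENNReal.ofReal ((∏ i, Real.Gamma (1 + a i)) / Real.Gamma (1 + ∑ i, a i) *
        (∏ i, C i) * s ^ (∑ i, a i)) := by
  induction n with
  | zero =>
    intro X _ μ _ f hf a C d ha hC hsub s hs hsd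
    exact abstract_pi_base μ f hf a C d ha hC hsub s hs hsd
  | succ n IH =>
    intro X _ μ _ f hf a C d ha hC hsub s hs hsd
    haveI : ∀ j : Fin (n+1), SigmaFinite (μ ((0 : Fin (n+2)).succAbove j)) := fun j => by
      infer_instance
    set b : ℝ := ∑ j : Fin (n+1), a ((0 : Fin (n+2)).succAbove j) with hbdef
    set Cb : ℝ := (∏ j : Fin (n+1), Real.Gamma (1 + a ((0 : Fin (n+2)).succAbove j))) /
        Real.Gamma (1 + ∑ j : Fin (n+1), a ((0 : Fin (n+2)).succAbove j)) *
        (∏ j : Fin (n+1), C ((0 : Fin (n+2)).succAbove j)) with hCbdef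
    have hb : 0 < b := Finset.sum_pos (fun j _ => ha _) Finset.univ_nonempty
    have hΓb : 0 < Real.Gamma (1 + b) := Real.Gamma_pos_of_pos (by linarith)
    have hCb : 0 < Cb := by
      apply mul_pos
      · apply div_pos
        · exact Finset.prod_pos fun j _ => Real.Gamma_pos_of_pos (by linarith [ha ((0 : Fin (n+2)).succAbove j)])
        · rw [← hbdef]; exact hΓb
      · exact Finset.prod_pos fun j _ => hC _
    set g : (∀ j : Fin (n+1), X ((0 : Fin (n+2)).succAbove j)) → ℝ≥0∞ :=
      fun p => ∑ j, f ((0 : Fin (n+2)).succAbove j) (p j) with hgdef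
    have hg : Measurable g :=
      Finset.measurable_sum _ fun j _ => (hf _).comp (measurable_pi_apply j)
    set T : Set (X 0 × ∀ j : Fin (n+1), X ((0 : Fin (n+2)).succAbove j)) :=
      {p | f 0 p.1 + g p.2 < ENNReal.ofReal s} with hTdef
    have hTmeas : MeasurableSet T :=
      measurableSet_lt (((hf 0).comp measurable_fst).add (hg.comp measurable_snd))
        measurable_const
    have hpre : {x : ∀ i, X i | ∑ i, f i (x i) < ENNReal.ofReal s}
        = (MeasurableEquiv.piFinSuccAbove X 0) ⁻¹' T := by
      ext x
      simp only [Set.mem_preimage, Set.mem_setOf_eq, hTdef, hgdef,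
        MeasurableEquiv.piFinSuccAbove_apply, Fin.insertNthEquiv_symm_apply,
        Fin.removeNth]
      rw [Fin.sum_univ_succAbove (fun i => f i (x i)) 0]
    rw [hpre,
      (measurePreserving_piFinSuccAbove μ 0).measure_preimage hTmeas.nullMeasurableSet]
    have hμ0 : ∀ r : ℝ, 0 < r → r ≤ s →
        μ 0 {x | f 0 x < ENNReal.ofReal r} ≤ ENNReal.ofReal (C 0 * r ^ a 0) :=
      fun r hr hrs => hsub 0 r hr
        (lt_of_le_of_lt (ENNReal.ofReal_le_ofReal hrs) (hsd 0))
    have hν : ∀ r : ℝ, 0 < r → r ≤ s →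
        (Measure.pi fun j => μ ((0 : Fin (n+2)).succAbove j))
          {p | g p < ENNReal.ofReal r} ≤ ENNReal.ofReal (Cb * r ^ b) := by
      intro r hr hrs
      have := IH (fun j => μ ((0 : Fin (n+2)).succAbove j))
        (fun j => f ((0 : Fin (n+2)).succAbove j))
        (fun j => hf _)
        (fun j => a ((0 : Fin (n+2)).succAbove j))
        (fun j => C ((0 : Fin (n+2)).succAbove j))
        (fun j => d ((0 : Fin (n+2)).succAbove j))
        (fun j => ha _) (fun j => hC _)
        (fun j => hsub _)
        r hr
        (fun j => lt_of_le_of_lt (ENNReal.ofReal_le_ofReal hrs) (hsd _))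
      rw [hCbdef, hbdef]
      exact this
    have hconv := conv_step' (μ 0) (Measure.pi fun j => μ ((0 : Fin (n+2)).succAbove j))
      (hf 0) hg (ha 0) hb (hC 0).le hCb.le hs hμ0 hν
    refine hconv.trans (ENNReal.ofReal_le_ofReal (le_of_eq ?_))
    have hsum : (∑ i, a i) = a 0 + b := by
      rw [hbdef]; exact Fin.sum_univ_succAbove a 0
    have hprodΓ : (∏ i, Real.Gamma (1 + a i))
        = Real.Gamma (1 + a 0) * ∏ j : Fin (n+1), Real.Gamma (1 + a ((0 : Fin (n+2)).succAbove j)) :=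
      Fin.prod_univ_succAbove (fun i => Real.Gamma (1 + a i)) 0
    have hprodC : (∏ i, C i)
        = C 0 * ∏ j : Fin (n+1), C ((0 : Fin (n+2)).succAbove j) :=
      Fin.prod_univ_succAbove C 0
    have hΓb' : Real.Gamma (1 + b) ≠ 0 := hΓb.ne'
    have hΓab' : Real.Gamma (1 + a 0 + b) ≠ 0 :=
      (Real.Gamma_pos_of_pos (by linarith [ha 0])).ne'
    rw [hsum, hprodΓ, hprodC, hCbdef,
      show (1:ℝ) + (a 0 + b) = 1 + a 0 + b by ring, ← hbdef]
    field_simp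

/-- Subregularity of the product measure `μ₁ ⊗ ⋯ ⊗ μ_ℓ` with respect to
the `1/k`-th power of the weighted distortion `ρ_{(ℓ)}(x,y) = Σᵢ αᵢ·ρᵢ(xᵢ,yᵢ)`, for
σ-finite measures `μᵢ` that are `ρᵢ^{1/k}`-subregular of dimension `mᵢ` with constants
`cᵢ, δᵢ`. -/
theorem subregular_pi
    {ℓ : ℕ} (hℓ : 0 < ℓ)
    {X Y : Fin ℓ → Type*} [∀ i, MeasurableSpace (X i)] [∀ i, MeasurableSpace (Y i)]
    (k : ℝ) (hk : 0 < k)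
    (ρ : ∀ i, X i → Y i → ℝ≥0∞) (hρ : ∀ i, Measurable (Function.uncurry (ρ i)))
    (α : Fin ℓ → ℝ) (hα : ∀ i, 0 < α i)
    (μ : ∀ i, Measure (X i)) [∀ i, SigmaFinite (μ i)]
    (m c : Fin ℓ → ℝ) (δ : Fin ℓ → ℝ≥0∞)
    (hm : ∀ i, 0 < m i) (hc : ∀ i, 0 < c i) (hδ : ∀ i, 0 < δ i)
    (hsub : ∀ i, ∀ y : Y i, ∀ t : ℝ, 0 < t → ENNReal.ofReal t < δ i →
      (μ i) {x | (ρ i x y) ^ (1 / k) < ENNReal.ofReal t} ≤ ENNReal.ofReal (c i * t ^ m i)) :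
    ∀ y : ∀ i, Y i, ∀ t : ℝ, 0 < t →
      ENNReal.ofReal t < ⨅ i, ENNReal.ofReal (α i ^ (1 / k)) * δ i →
      (Measure.pi μ)
          {x : ∀ i, X i | (∑ i, ENNReal.ofReal (α i) * ρ i (x i) (y i)) ^ (1 / k)
            < ENNReal.ofReal t} ≤
        ENNReal.ofReal
          ((∏ i, Real.Gamma (1 + m i / k)) / Real.Gamma (1 + ∑ i, m i / k) *
            (∏ i, c i * α i ^ (-(m i / k))) *
            t ^ (∑ i, m i)) := by
  obtain ⟨n, rfl⟩ := Nat.exists_eq_succ_of_ne_zero hℓ.ne'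
  intro y t ht htδ
  have hfmeas : ∀ i, Measurable (fun x : X i => ENNReal.ofReal (α i) * ρ i x (y i)) :=
    fun i => measurable_const.mul
      ((hρ i).comp (measurable_id.prodMk measurable_const))
  have ha : ∀ i : Fin (n+1), 0 < m i / k := fun i => div_pos (hm i) hk
  have hC : ∀ i : Fin (n+1), 0 < c i * α i ^ (-(m i / k)) :=
    fun i => mul_pos (hc i) (Real.rpow_pos_of_pos (hα i) _)
  have hsub' : ∀ i : Fin (n+1), ∀ s : ℝ, 0 < s →
      ENNReal.ofReal s < (ENNReal.ofReal (α i ^ (1 / k)) * δ i) ^ (k : ℝ) →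
      μ i {x | ENNReal.ofReal (α i) * ρ i x (y i) < ENNReal.ofReal s} ≤
        ENNReal.ofReal ((c i * α i ^ (-(m i / k))) * s ^ (m i / k)) := by
    intro i s hs hsd
    have hαi := hα i
    have hdiv : (0:ℝ) < s / α i := div_pos hs hαi
    have ht' : (0:ℝ) < (s / α i) ^ (1 / k) := Real.rpow_pos_of_pos hdiv _
    have hset : {x : X i | ENNReal.ofReal (α i) * ρ i x (y i) < ENNReal.ofReal s}
        = {x : X i | (ρ i x (y i)) ^ (1 / k)
            < ENNReal.ofReal ((s / α i) ^ (1 / k))} := by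
      ext x
      rw [Set.mem_setOf_eq, Set.mem_setOf_eq,
        ← ENNReal.ofReal_rpow_of_pos hdiv,
        ENNReal.rpow_lt_rpow_iff (one_div_pos.mpr hk),
        show ENNReal.ofReal s = ENNReal.ofReal (α i) * ENNReal.ofReal (s / α i) by
          rw [← ENNReal.ofReal_mul hαi.le]; congr 1; field_simp,
        ENNReal.mul_lt_mul_iff_right (ENNReal.ofReal_pos.mpr hαi).ne' ENNReal.ofReal_ne_top]
    rw [hset]
    have hδi : ENNReal.ofReal ((s / α i) ^ (1 / k)) < δ i := by
      have h1 : (ENNReal.ofReal s) ^ (1/k : ℝ)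
          < ((ENNReal.ofReal (α i ^ (1 / k)) * δ i) ^ (k : ℝ)) ^ (1/k : ℝ) :=
        ENNReal.rpow_lt_rpow hsd (one_div_pos.mpr hk)
      rw [← ENNReal.rpow_mul, mul_one_div_cancel hk.ne', ENNReal.rpow_one] at h1
      rw [ENNReal.ofReal_rpow_of_pos hs] at h1
      rw [Real.div_rpow hs.le hαi.le,
        ENNReal.ofReal_div_of_pos (Real.rpow_pos_of_pos hαi _)]
      rw [ENNReal.div_lt_iff (Or.inl (ENNReal.ofReal_pos.mpr
          (Real.rpow_pos_of_pos hαi _)).ne') (Or.inl ENNReal.ofReal_ne_top)]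
      calc ENNReal.ofReal (s ^ (1/k)) < ENNReal.ofReal (α i ^ (1 / k)) * δ i := h1
        _ = δ i * ENNReal.ofReal (α i ^ (1 / k)) := mul_comm _ _
    refine (hsub i (y i) _ ht' hδi).trans (le_of_eq ?_)
    congr 1
    rw [← Real.rpow_mul hdiv.le, show 1 / k * m i = m i / k by ring,
      Real.div_rpow hs.le hαi.le, Real.rpow_neg hαi.le, div_eq_mul_inv]
    ring
  have hsd' : ∀ i : Fin (n+1), ENNReal.ofReal (t ^ k)
      < (ENNReal.ofReal (α i ^ (1 / k)) * δ i) ^ (k : ℝ) := by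
    intro i
    have h1 : ENNReal.ofReal t < ENNReal.ofReal (α i ^ (1 / k)) * δ i :=
      lt_of_lt_of_le htδ (iInf_le _ i)
    have h2 := ENNReal.rpow_lt_rpow h1 hk
    rwa [ENNReal.ofReal_rpow_of_pos ht] at h2
  have habs := abstract_pi n μ (fun i x => ENNReal.ofReal (α i) * ρ i x (y i)) hfmeas
    (fun i => m i / k) (fun i => c i * α i ^ (-(m i / k)))
    (fun i => (ENNReal.ofReal (α i ^ (1 / k)) * δ i) ^ (k : ℝ))
    ha hC hsub' (t ^ k) (Real.rpow_pos_of_pos ht k) hsd'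
  have hset2 : {x : ∀ i, X i | (∑ i, ENNReal.ofReal (α i) * ρ i (x i) (y i)) ^ (1 / k)
      < ENNReal.ofReal t}
      = {x : ∀ i, X i | ∑ i, ENNReal.ofReal (α i) * ρ i (x i) (y i)
          < ENNReal.ofReal (t ^ k)} := by
    ext x
    rw [Set.mem_setOf_eq, Set.mem_setOf_eq, ← ENNReal.ofReal_rpow_of_pos ht,
      ← ENNReal.rpow_lt_rpow_iff hk
        (x := (∑ i, ENNReal.ofReal (α i) * ρ i (x i) (y i)) ^ (1 / k))
        (y := ENNReal.ofReal t),
      ← ENNReal.rpow_mul, one_div_mul_cancel hk.ne', ENNReal.rpow_one]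
  rw [hset2]
  refine habs.trans (le_of_eq ?_)
  congr 1
  rw [← Real.rpow_mul ht.le]
  congr 1
  rw [Finset.mul_sum]
  congr 1
  exact Finset.sum_congr rfl fun i _ => by field_simp
end

section
/- Let X be a random variable taking values in a σ-finite measure space (X,𝒳,μ) whose distribution μ_X satisfies μ_X ≪ μ and |h_μ(X)| < ∞, let (Y,𝒴) be a measurable space, and let ρ: X×Y → [0,∞] be a measurable distortion function. Define ν(s) = sup_{y∈Y} ∫ e^{-s·ρ(x,y)} dμ(x) for s ∈ [0,∞). Then for every D ∈ (0,∞) and every probability measure π on X×Y whose first marginal equals μ_X and which satisfies ∫ ρ dπ ≤ D, the Kullback–Leibler divergence of π with respect to the product of its marginals satisfies D_KL(π ‖ π₁ ⊗ π₂) ≥ h_μ(X) − inf_{s≥0}( s·D + log ν(s) ), where π₁ and π₂ denote the first and second marginals of π. -/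
open MeasureTheory
open scoped ENNReal Classical

/-- `e^{-t}` for `t ∈ [0,∞]`, with the convention `e^{-∞} = 0`. -/
noncomputable def expNeg (t : ℝ≥0∞) : ℝ≥0∞ :=
  if t = ∞ then 0 else ENNReal.ofReal (Real.exp (-t.toReal))

/-- The natural logarithm on `[0,∞]`, with values in the extended reals. -/
noncomputable def elog (x : ℝ≥0∞) : EReal :=
  if x = 0 then ⊥ else if x = ∞ then ⊤ else ((Real.log x.toReal : ℝ) : EReal)

/-- The Kullback–Leibler divergence `D_KL(π‖λ) = ∫ log(dπ/dλ) dπ` if `π ≪ λ` (and the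
integral makes sense), and `∞` otherwise. -/
noncomputable def klDivE {Z : Type*} [MeasurableSpace Z] (π lam : Measure Z) : EReal :=
  if π ≪ lam ∧ Integrable (fun z => Real.log ((π.rnDeriv lam z).toReal)) π then
    (((∫ z, Real.log ((π.rnDeriv lam z).toReal) ∂π : ℝ) : EReal))
  else ⊤

lemma measurable_expNeg : Measurable expNeg := by
  unfold expNeg
  exact Measurable.ite (measurableSet_eq) measurable_const
    (ENNReal.measurable_ofReal.comp (Real.measurable_exp.comp
      (ENNReal.measurable_toReal.neg)))

lemma expNeg_eq_zero_iff {t : ℝ≥0∞} : expNeg t = 0 ↔ t = ∞ := by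
  unfold expNeg
  split_ifs with h
  · simp [h]
  · simp [h, ENNReal.ofReal_eq_zero, not_le.mpr (Real.exp_pos _)]

/-- Shannon-type lower bound on the rate-distortion function: for every
probability measure `π` on `X × Y` with first marginal `μ_X` and expected distortion at
most `D`, `D_KL(π ‖ π₁ ⊗ π₂) ≥ h_μ(X) − inf_{s ≥ 0}(s·D + log ν(s))`, where
`ν(s) = sup_y ∫ e^{-s·ρ(x,y)} dμ(x)` and `h_μ(X) = −∫ log (dμ_X/dμ) dμ_X`. -/
theorem klDiv_lower_bound
    {A B : Type*} [MeasurableSpace A] [MeasurableSpace B]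
    (μ : Measure A) [SigmaFinite μ] (μX : Measure A) [IsProbabilityMeasure μX]
    (hac : μX ≪ μ)
    (hent : Integrable (fun x => Real.log ((μX.rnDeriv μ x).toReal)) μX)
    (ρ : A → B → ℝ≥0∞) (hρ : Measurable (Function.uncurry ρ))
    (D : ℝ) (hD : 0 < D)
    (π : Measure (A × B)) [IsProbabilityMeasure π]
    (hfst : π.fst = μX)
    (hdist : ∫⁻ p, ρ p.1 p.2 ∂π ≤ ENNReal.ofReal D) :
    ((-(∫ x, Real.log ((μX.rnDeriv μ x).toReal) ∂μX) : ℝ) : EReal)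
      - sInf {e : EReal | ∃ s : ℝ, 0 ≤ s ∧
          e = ((s * D : ℝ) : EReal)
            + elog (⨆ y : B, ∫⁻ x, expNeg (ENNReal.ofReal s * ρ x y) ∂μ)}
      ≤ klDivE π (π.fst.prod π.snd) := by
  classical
  rw [klDivE]
  split_ifs with hcase
  swap
  · exact le_top
  obtain ⟨hacπ, hint⟩ := hcase
  set f : A → ℝ≥0∞ := μX.rnDeriv μ with hfdef
  set lam : Measure (A × B) := π.fst.prod π.snd with hlamdef
  set r : A × B → ℝ≥0∞ := π.rnDeriv lam with hrdef
  set I : ℝ := ∫ x, Real.log (f x).toReal ∂μX with hIdef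
  set K : ℝ := ∫ z, Real.log (r z).toReal ∂π with hKdef
  -- basic measurability
  have mf : Measurable f := Measure.measurable_rnDeriv _ _
  have mr : Measurable r := Measure.measurable_rnDeriv _ _
  have mρ : Measurable fun z : A × B => ρ z.1 z.2 := hρ
  have hmapfst : π.map Prod.fst = μX := hfst
  -- nonemptiness
  have hne : Nonempty (A × B) := by
    rcases isEmpty_or_nonempty (A × B) with h | h
    · have h1 : π Set.univ = 1 := measure_univ
      rw [Set.univ_eq_empty_iff.mpr h, measure_empty] at h1
      exact absurd h1 (by norm_num)
    · exact h
  have hdist' : ∫⁻ p, ρ p.1 p.2 ∂π ≠ ∞ :=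
    ne_top_of_le_ne_top ENNReal.ofReal_ne_top hdist
  -- a.e. facts
  have h5 : ∀ᵐ z ∂π, ρ z.1 z.2 < ∞ := ae_lt_top mρ hdist'
  have transfer : ∀ {p : A → Prop}, (∀ᵐ x ∂μX, p x) → ∀ᵐ z ∂π, p z.1 := by
    intro p hp
    apply ae_of_ae_map measurable_fst.aemeasurable
    rwa [hmapfst]
  have h1 : ∀ᵐ z ∂π, 0 < f z.1 := transfer (Measure.rnDeriv_pos hac)
  have h2 : ∀ᵐ z ∂π, f z.1 < ∞ := transfer (hac.ae_le (Measure.rnDeriv_lt_top μX μ))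
  have h3 : ∀ᵐ z ∂π, 0 < r z := Measure.rnDeriv_pos hacπ
  have h4 : ∀ᵐ z ∂π, r z < ∞ := hacπ.ae_le (Measure.rnDeriv_lt_top π lam)
  -- integrability
  have iρ : Integrable (fun z => (ρ z.1 z.2).toReal) π :=
    integrable_toReal_of_lintegral_ne_top mρ.aemeasurable hdist'
  have ilogf : Integrable (fun z : A × B => Real.log (f z.1).toReal) π := by
    have := (integrable_map_measure
      (g := fun x => Real.log (f x).toReal)
      (f := Prod.fst (α := A) (β := B))
      (by rw [hmapfst]; exact ((Real.measurable_log.comp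
        (ENNReal.measurable_toReal.comp mf)).aestronglyMeasurable))
      measurable_fst.aemeasurable).mp
    rw [hmapfst] at this
    exact this hent
  -- the key inequality for each s
  have key : ∀ s : ℝ, 0 ≤ s →
      (((-I - K : ℝ)) : EReal) ≤ ((s * D : ℝ) : EReal)
        + elog (⨆ y : B, ∫⁻ x, expNeg (ENNReal.ofReal s * ρ x y) ∂μ) := by
    intro s hs
    set ν : ℝ≥0∞ := ⨆ y : B, ∫⁻ x, expNeg (ENNReal.ofReal s * ρ x y) ∂μ with hνdef
    rcases eq_or_ne ν 0 with hν0 | hν0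
    · -- ν = 0 : contradiction with hdist
      exfalso
      have hall : ∀ y : B, ∫⁻ x, expNeg (ENNReal.ofReal s * ρ x y) ∂μ = 0 := by
        intro y
        exact le_antisymm (hν0 ▸ le_iSup (fun y : B => ∫⁻ x, expNeg (ENNReal.ofReal s * ρ x y) ∂μ) y) (zero_le)
      rcases eq_or_lt_of_le hs with hs0 | hspos
      · -- s = 0 : μ = 0, contradiction
        obtain ⟨z0⟩ := hne
        have := hall z0.2
        simp only [← hs0, ENNReal.ofReal_zero, zero_mul] at this
        have h1 : expNeg 0 = 1 := by simp [expNeg]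
        rw [h1] at this
        simp only [lintegral_one] at this
        have hμ0 : μ = 0 := Measure.measure_univ_eq_zero.mp this
        have : μX Set.univ = 0 := hac (by simp [hμ0])
        simp [measure_univ] at this
      · -- s > 0 : ρ = ∞ π-a.e.
        have hsec : ∀ y : B, μX {x | ¬ ρ x y = ∞} = 0 := by
          intro y
          have h0 : ∀ᵐ x ∂μ, expNeg (ENNReal.ofReal s * ρ x y) = 0 := by
            have hm : Measurable fun x => expNeg (ENNReal.ofReal s * ρ x y) :=
              measurable_expNeg.comp ((hρ.comp (measurable_prodMk_right)).const_mul _)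
            exact (lintegral_eq_zero_iff hm).mp (hall y)
          have h0' : ∀ᵐ x ∂μ, ρ x y = ∞ := by
            filter_upwards [h0] with x hx
            have := expNeg_eq_zero_iff.mp hx
            rcases ENNReal.mul_eq_top.mp this with h | h
            · exact h.2
            · exact absurd h.1 ENNReal.ofReal_ne_top
          have h0'' : ∀ᵐ x ∂μX, ρ x y = ∞ := hac.ae_le h0'
          exact ae_iff.mp h0'' 
        have hT : lam {z : A × B | ¬ ρ z.1 z.2 = ∞} = 0 := by
          have hTm : MeasurableSet {z : A × B | ¬ ρ z.1 z.2 = ∞} :=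
            (mρ (measurableSet_singleton ∞)).compl
          rw [hlamdef, hfst, Measure.prod_apply_symm hTm]
          have : ∀ y : B, μX ((fun x => (x, y)) ⁻¹' {z : A × B | ¬ ρ z.1 z.2 = ∞}) = 0 := by
            intro y
            exact hsec y
          simp only [this]
          simp
        have hπT : ∀ᵐ z ∂π, ρ z.1 z.2 = ∞ := by
          have := hacπ hT
          rwa [← ae_iff] at this
        have : ∫⁻ p, ρ p.1 p.2 ∂π = ∞ := by
          rw [lintegral_congr_ae (hπT.mono fun z hz => hz)]
          simp [lintegral_const, measure_univ]
        exact hdist' this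
    rcases eq_or_ne ν ∞ with hνtop | hνtop
    · rw [elog, if_neg hν0, if_pos hνtop]
      rw [EReal.add_top_of_ne_bot (by exact EReal.coe_ne_bot _)]
      exact le_top
    -- main case : 0 < ν < ∞
    have hνt : 0 < ν.toReal := ENNReal.toReal_pos hν0 hνtop
    set νt : ℝ := ν.toReal with hνtdef
    set φ : A × B → ℝ := fun z =>
      -Real.log (f z.1).toReal - Real.log (r z).toReal - s * (ρ z.1 z.2).toReal with hφdef
    have mφ : Measurable φ := by
      apply Measurable.sub
      apply Measurable.sub
      · exact (Real.measurable_log.comp (ENNReal.measurable_toReal.comp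
          (mf.comp measurable_fst))).neg
      · exact Real.measurable_log.comp (ENNReal.measurable_toReal.comp mr)
      · exact (ENNReal.measurable_toReal.comp mρ).const_mul s
    have iφ : Integrable φ π := (ilogf.neg.sub hint).sub (iρ.const_mul s)
    -- pointwise identification
    have haeq : ∀ᵐ z ∂π, ENNReal.ofReal (Real.exp (φ z))
        = expNeg (ENNReal.ofReal s * ρ z.1 z.2) * (f z.1)⁻¹ * (r z)⁻¹ := by
      filter_upwards [h1, h2, h3, h4, h5] with z hz1 hz2 hz3 hz4 hz5
      have hfa : 0 < (f z.1).toReal := ENNReal.toReal_pos hz1.ne' hz2.ne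
      have hra : 0 < (r z).toReal := ENNReal.toReal_pos hz3.ne' hz4.ne
      have e1 : Real.exp (-Real.log (f z.1).toReal) = (f z.1).toReal⁻¹ := by
        rw [Real.exp_neg, Real.exp_log hfa]
      have e2 : Real.exp (-Real.log (r z).toReal) = (r z).toReal⁻¹ := by
        rw [Real.exp_neg, Real.exp_log hra]
      have hexp : Real.exp (φ z) = Real.exp (-(s * (ρ z.1 z.2).toReal))
          * (f z.1).toReal⁻¹ * (r z).toReal⁻¹ := by
        simp only [hφdef]
        rw [show -Real.log (f z.1).toReal - Real.log (r z).toReal - s * (ρ z.1 z.2).toReal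
          = (-(s * (ρ z.1 z.2).toReal)) + (-Real.log (f z.1).toReal)
            + (-Real.log (r z).toReal) by ring]
        rw [Real.exp_add, Real.exp_add, e1, e2]
      rw [hexp, ENNReal.ofReal_mul (by positivity), ENNReal.ofReal_mul (by positivity)]
      congr 1
      · congr 1
        · rw [expNeg, if_neg (by
            exact ENNReal.mul_ne_top ENNReal.ofReal_ne_top hz5.ne)]
          congr 2
          rw [ENNReal.toReal_mul, ENNReal.toReal_ofReal hs]
        · rw [ENNReal.ofReal_inv_of_pos hfa, ENNReal.ofReal_toReal hz2.ne]
      · rw [ENNReal.ofReal_inv_of_pos hra, ENNReal.ofReal_toReal hz4.ne]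
    -- lintegral bound
    set G : A × B → ℝ≥0∞ := fun z => expNeg (ENNReal.ofReal s * ρ z.1 z.2) * (f z.1)⁻¹
      with hGdef
    have mG : Measurable G :=
      ((measurable_expNeg.comp (mρ.const_mul _)).mul
        ((mf.comp measurable_fst).inv))
    have hL : ∫⁻ z, ENNReal.ofReal (Real.exp (φ z)) ∂π ≤ ν := by
      rw [lintegral_congr_ae haeq]
      have step2 : ∫⁻ z, G z * (r z)⁻¹ ∂π = ∫⁻ z, r z * (G z * (r z)⁻¹) ∂lam :=
        (lintegral_rnDeriv_mul hacπ (mG.mul mr.inv).aemeasurable).symm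
      calc ∫⁻ z, expNeg (ENNReal.ofReal s * ρ z.1 z.2) * (f z.1)⁻¹ * (r z)⁻¹ ∂π
          = ∫⁻ z, G z * (r z)⁻¹ ∂π := rfl
        _ = ∫⁻ z, r z * (G z * (r z)⁻¹) ∂lam := step2
        _ ≤ ∫⁻ z, G z ∂lam := by
            apply lintegral_mono
            intro z
            calc r z * (G z * (r z)⁻¹) = G z * (r z * (r z)⁻¹) := by ring
              _ ≤ G z * 1 := mul_le_mul_right (ENNReal.mul_inv_le_one _) _
              _ = G z := mul_one _
        _ = ∫⁻ y, ∫⁻ x, G (x, y) ∂μX ∂π.snd := by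
            rw [hlamdef, hfst]
            exact lintegral_prod_symm G mG.aemeasurable
        _ ≤ ∫⁻ y, ν ∂π.snd := by
            apply lintegral_mono
            intro y
            show ∫⁻ x, G (x, y) ∂μX ≤ ν
            have inner : ∫⁻ x, G (x, y) ∂μX
                = ∫⁻ x, f x * (expNeg (ENNReal.ofReal s * ρ x y) * (f x)⁻¹) ∂μ :=
              (lintegral_rnDeriv_mul hac
                ((measurable_expNeg.comp ((hρ.comp measurable_prodMk_right).const_mul _)).mul
                  mf.inv).aemeasurable).symm
            rw [inner]
            calc ∫⁻ x, f x * (expNeg (ENNReal.ofReal s * ρ x y) * (f x)⁻¹) ∂μ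
                ≤ ∫⁻ x, expNeg (ENNReal.ofReal s * ρ x y) ∂μ := by
                  apply lintegral_mono
                  intro x
                  calc f x * (expNeg (ENNReal.ofReal s * ρ x y) * (f x)⁻¹)
                      = expNeg (ENNReal.ofReal s * ρ x y) * (f x * (f x)⁻¹) := by ring
                    _ ≤ expNeg (ENNReal.ofReal s * ρ x y) * 1 :=
                        mul_le_mul_right (ENNReal.mul_inv_le_one _) _
                    _ = _ := mul_one _
              _ ≤ ν := le_iSup (fun y : B => ∫⁻ x, expNeg (ENNReal.ofReal s * ρ x y) ∂μ) y
        _ = ν := by simp [lintegral_const, measure_univ]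
    -- Jensen-style argument
    set ψ : A × B → ℝ := fun z => Real.exp (φ z - Real.log νt) with hψdef
    have mψ : Measurable ψ := Real.measurable_exp.comp (mφ.sub measurable_const)
    have hψL : ∫⁻ z, ENNReal.ofReal (ψ z) ∂π ≤ 1 := by
      have hpt : ∀ z, ENNReal.ofReal (ψ z)
          = ENNReal.ofReal (Real.exp (φ z)) * ENNReal.ofReal νt⁻¹ := by
        intro z
        simp only [hψdef]
        rw [Real.exp_sub, Real.exp_log hνt, div_eq_mul_inv,
          ENNReal.ofReal_mul (Real.exp_nonneg _)]
      simp_rw [hpt]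
      have hmexp : Measurable fun z => ENNReal.ofReal (Real.exp (φ z)) :=
        ENNReal.measurable_ofReal.comp (Real.measurable_exp.comp mφ)
      rw [lintegral_mul_const _ hmexp]
      have : ENNReal.ofReal νt⁻¹ = ν⁻¹ := by
        rw [ENNReal.ofReal_inv_of_pos hνt, ENNReal.ofReal_toReal hνtop]
      rw [this]
      calc (∫⁻ z, ENNReal.ofReal (Real.exp (φ z)) ∂π) * ν⁻¹
          ≤ ν * ν⁻¹ := mul_le_mul_left hL _
        _ ≤ 1 := ENNReal.mul_inv_le_one _
    have iψ : Integrable ψ π := by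
      refine ⟨mψ.aestronglyMeasurable, ?_⟩
      rw [hasFiniteIntegral_iff_norm]
      calc ∫⁻ z, ENNReal.ofReal ‖ψ z‖ ∂π = ∫⁻ z, ENNReal.ofReal (ψ z) ∂π := by
            apply lintegral_congr
            intro z
            rw [Real.norm_eq_abs, abs_of_nonneg (Real.exp_nonneg _)]
        _ ≤ 1 := hψL
        _ < ∞ := ENNReal.one_lt_top
    have hmono : ∀ z, φ z - Real.log νt ≤ ψ z - 1 := by
      intro z
      have := Real.add_one_le_exp (φ z - Real.log νt)
      simp only [hψdef]
      linarith
    have hIψ : ∫ z, ψ z ∂π ≤ 1 := by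
      rw [integral_eq_lintegral_of_nonneg_ae
        (Filter.Eventually.of_forall fun z => Real.exp_nonneg _) mψ.aestronglyMeasurable]
      calc (∫⁻ z, ENNReal.ofReal (ψ z) ∂π).toReal ≤ (1 : ℝ≥0∞).toReal :=
            ENNReal.toReal_mono ENNReal.one_ne_top hψL
        _ = 1 := by simp
    have hφle : ∫ z, φ z ∂π ≤ Real.log νt := by
      have h := integral_mono (iφ.sub (integrable_const (Real.log νt)))
        (iψ.sub (integrable_const 1)) hmono
      simp only [Pi.sub_apply] at h
      rw [integral_sub iφ (integrable_const _), integral_sub iψ (integrable_const _),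
        integral_const, integral_const, probReal_univ] at h
      simp only [ENNReal.toReal_one, one_smul, smul_eq_mul, one_mul] at h
      linarith [hIψ]
    -- compute ∫ φ
    have hI' : ∫ z, Real.log (f z.1).toReal ∂π = I := by
      rw [hIdef, ← hmapfst]
      exact (integral_map measurable_fst.aemeasurable
        ((Real.measurable_log.comp (ENNReal.measurable_toReal.comp mf)).aestronglyMeasurable)).symm
    set σ : ℝ := ∫ z, (ρ z.1 z.2).toReal ∂π with hσdef
    have hσD : σ ≤ D := by
      rw [hσdef, integral_toReal mρ.aemeasurable h5]
      calc (∫⁻ p, ρ p.1 p.2 ∂π).toReal ≤ (ENNReal.ofReal D).toReal :=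
            ENNReal.toReal_mono ENNReal.ofReal_ne_top hdist
        _ = D := ENNReal.toReal_ofReal hD.le
    have hφval : ∫ z, φ z ∂π = -I - K - s * σ := by
      have ib : Integrable (fun z : A × B => -Real.log (f z.1).toReal) π := ilogf.neg
      have ia : Integrable
          (fun z : A × B => -Real.log (f z.1).toReal - Real.log (r z).toReal) π :=
        ib.sub hint
      simp only [hφdef]
      rw [integral_sub ia (iρ.const_mul s), integral_sub ib hint, integral_neg, hI',
        integral_const_mul]
    have hreal : -I - K ≤ s * D + Real.log νt := by
      rw [hφval] at hφle
      have hsσ : s * σ ≤ s * D := mul_le_mul_of_nonneg_left hσD hs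
      linarith
    rw [elog, if_neg hν0, if_neg hνtop, ← EReal.coe_add]
    exact_mod_cast hreal
  -- assemble
  have hb : (((-I - K : ℝ)) : EReal) ≤ sInf {e : EReal | ∃ s : ℝ, 0 ≤ s ∧
      e = ((s * D : ℝ) : EReal)
        + elog (⨆ y : B, ∫⁻ x, expNeg (ENNReal.ofReal s * ρ x y) ∂μ)} := by
    apply le_sInf
    rintro e ⟨s, hs, rfl⟩
    exact key s hs
  calc ((-I : ℝ) : EReal) - sInf _ ≤ ((-I : ℝ) : EReal) - (((-I - K : ℝ)) : EReal) :=
        EReal.sub_le_sub le_rfl hb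
    _ = ((K : ℝ) : EReal) := by
        rw [← EReal.coe_sub]
        norm_num
end

section
/- Let (X,𝒳,μ) be a measure space, (Y,𝒴) a measurable space, and ρ: X×Y → [0,∞] a measurable distortion function. Let k ∈ (0,∞) and suppose μ is ρ^{1/k}-subregular of dimension m ∈ (0,∞) with subregularity constants c ∈ (0,∞) and δ₀ ∈ (0,∞), and that μ(X) = 1. Then for all s ∈ (0,∞), sup_{y∈Y} ∫ e^{-s·ρ(x,y)} dμ(x) ≤ c·s^{-m/k}·γ(1 + m/k, s·δ₀^k) + e^{-s·δ₀^k}, where γ(a,t) = ∫₀^t u^{a-1}e^{-u} du is the lower incomplete gamma function. -/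
open MeasureTheory
open scoped ENNReal Classical

lemma expNeg_anti {a b : ℝ≥0∞} (h : a ≤ b) : expNeg b ≤ expNeg a := by
  unfold expNeg
  split_ifs with hb ha ha
  · exact zero_le
  · exact zero_le
  · exact absurd (top_le_iff.1 (ha ▸ h)) hb
  · exact ENNReal.ofReal_le_ofReal (Real.exp_le_exp.2 (neg_le_neg (ENNReal.toReal_mono hb h)))

lemma int_sexp (s a b : ℝ) :
    ∫ u in a..b, s * Real.exp (-(s*u)) = Real.exp (-(s*a)) - Real.exp (-(s*b)) := by
  have h : ∀ u ∈ Set.uIcc a b,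
      HasDerivAt (fun u => -Real.exp (-(s*u))) (s * Real.exp (-(s*u))) u := by
    intro u _
    have h1 : HasDerivAt (fun u : ℝ => -(s*u)) (-s) u := by
      exact (((hasDerivAt_id u).const_mul s).neg).congr_deriv (by simp)
    have h2 := (h1.exp).neg
    exact h2.congr_deriv (by ring)
  have hc : IntervalIntegrable (fun u => s * Real.exp (-(s*u))) volume a b :=
    (Continuous.intervalIntegrable (by continuity) a b)
  rw [intervalIntegral.integral_eq_sub_of_hasDerivAt h hc]
  ring

/-- If the probability measure `μ` is `ρ^{1/k}`-subregular of dimension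
`m` with constants `c ∈ (0,∞)` and `δ₀ ∈ (0,∞)`, then for all `s ∈ (0,∞)`,
`sup_y ∫ e^{-s·ρ(x,y)} dμ(x) ≤ c·s^{-m/k}·γ(1+m/k, s·δ₀^k) + e^{-s·δ₀^k}`, where
`γ(a,t) = ∫₀^t u^{a-1} e^{-u} du` is the lower incomplete gamma function. -/
theorem laplace_transform_bound_of_subregular
    {X Y : Type*} [MeasurableSpace X] [MeasurableSpace Y]
    (μ : Measure X) [IsProbabilityMeasure μ]
    (ρ : X → Y → ℝ≥0∞) (hρ : Measurable (Function.uncurry ρ))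
    (k m c δ₀ : ℝ) (hk : 0 < k) (hm : 0 < m) (hc : 0 < c) (hδ₀ : 0 < δ₀)
    (hsub : ∀ y : Y, ∀ t : ℝ, 0 < t → t < δ₀ →
      μ {x | (ρ x y) ^ (1 / k) < ENNReal.ofReal t} ≤ ENNReal.ofReal (c * t ^ m)) :
    ∀ s : ℝ, 0 < s →
      (⨆ y : Y, ∫⁻ x, expNeg (ENNReal.ofReal s * ρ x y) ∂μ) ≤
        ENNReal.ofReal
          (c * s ^ (-(m / k)) * (∫ u in (0:ℝ)..(s * δ₀ ^ k), u ^ (m / k) * Real.exp (-u))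
            + Real.exp (-(s * δ₀ ^ k))) := by
  intro s hs
  set D : ℝ := δ₀ ^ k with hDdef
  have hD : 0 < D := Real.rpow_pos_of_pos hδ₀ k
  set C : ℝ := Real.exp (-(s * D)) with hCdef
  set g : ℝ → ℝ≥0∞ := fun u => ENNReal.ofReal (s * Real.exp (-(s*u))) with hgdef
  have hgcont : Continuous fun u : ℝ => s * Real.exp (-(s*u)) := by continuity
  have hgmeas : Measurable g := hgcont.measurable.ennreal_ofReal
  have hgnn : ∀ u : ℝ, 0 ≤ s * Real.exp (-(s*u)) :=
    fun u => mul_nonneg hs.le (Real.exp_pos _).le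
  refine iSup_le fun y => ?_
  have hρy : Measurable fun x => ρ x y :=
    hρ.comp (measurable_id.prodMk measurable_const)
  -- pointwise bound
  have key : ∀ x, expNeg (ENNReal.ofReal s * ρ x y) ≤
      (∫⁻ u in Set.Ioo 0 D, if ρ x y < ENNReal.ofReal u then g u else 0)
        + ENNReal.ofReal C := by
    intro x
    by_cases h : ρ x y < ENNReal.ofReal D
    · have hzt : ρ x y ≠ ∞ := h.ne_top
      set z := (ρ x y).toReal with hzdef
      have hz0 : 0 ≤ z := ENNReal.toReal_nonneg
      have hzD : z < D := ENNReal.toReal_lt_of_lt_ofReal h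
      have hρeq : ρ x y = ENNReal.ofReal z := (ENNReal.ofReal_toReal hzt).symm
      have hL : expNeg (ENNReal.ofReal s * ρ x y) = ENNReal.ofReal (Real.exp (-(s*z))) := by
        rw [hρeq, ← ENNReal.ofReal_mul hs.le]
        simp [expNeg, ENNReal.toReal_ofReal (mul_nonneg hs.le hz0)]
      have h1 : (∫⁻ u in Set.Ioo 0 D, if ρ x y < ENNReal.ofReal u then g u else 0)
          = ∫⁻ u in Set.Ioo 0 D, (Set.Ioi z).indicator g u := by
        refine setLIntegral_congr_fun measurableSet_Ioo ?_
        intro u hu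
        rw [hρeq]
        simp [Set.indicator_apply, Set.mem_Ioi, ENNReal.ofReal_lt_ofReal_iff hu.1]
      have h2 : (∫⁻ u in Set.Ioo 0 D, (Set.Ioi z).indicator g u)
          = ∫⁻ u in Set.Ioo z D, g u := by
        have hsets : Set.Ioi z ∩ Set.Ioo 0 D = Set.Ioo z D := by
          ext u
          simp only [Set.mem_inter_iff, Set.mem_Ioi, Set.mem_Ioo]
          constructor
          · rintro ⟨h1, h2, h3⟩; exact ⟨h1, h3⟩
          · rintro ⟨h1, h2⟩; exact ⟨h1, lt_of_le_of_lt hz0 h1, h2⟩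
        rw [lintegral_indicator measurableSet_Ioi g,
          Measure.restrict_restrict measurableSet_Ioi, hsets]
      have hint : IntegrableOn (fun u => s * Real.exp (-(s*u))) (Set.Ioo z D) volume :=
        (hgcont.integrableOn_Icc (a := z) (b := D)).mono_set Set.Ioo_subset_Icc_self
      have h3 : (∫⁻ u in Set.Ioo z D, g u)
          = ENNReal.ofReal (∫ u in z..D, s * Real.exp (-(s*u))) := by
        rw [← ofReal_integral_eq_lintegral_ofReal hint
          (Filter.Eventually.of_forall fun u => hgnn u)]
        congr 1
        rw [intervalIntegral.integral_of_le hzD.le, integral_Ioc_eq_integral_Ioo]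
      rw [hL, h1, h2, h3, int_sexp]
      have hle : Real.exp (-(s*D)) ≤ Real.exp (-(s*z)) :=
        Real.exp_le_exp.2 (neg_le_neg (by nlinarith))
      rw [← ENNReal.ofReal_add (sub_nonneg.2 hle) (Real.exp_pos _).le]
      rw [sub_add_cancel]
    · push_neg at h
      have : expNeg (ENNReal.ofReal s * ρ x y) ≤ ENNReal.ofReal C := by
        have h' : ENNReal.ofReal s * ENNReal.ofReal D ≤ ENNReal.ofReal s * ρ x y :=
          mul_le_mul_right h _
        refine le_trans (expNeg_anti h') (le_of_eq ?_)
        rw [← ENNReal.ofReal_mul hs.le]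
        simp [expNeg, ENNReal.toReal_ofReal (mul_nonneg hs.le hD.le), hCdef]
      exact le_trans this le_add_self
  -- product measurability for Tonelli
  have hprodmeas : Measurable fun p : X × ℝ =>
      if ρ p.1 y < ENNReal.ofReal p.2 then g p.2 else 0 := by
    refine Measurable.ite ?_ (hgmeas.comp measurable_snd) measurable_const
    exact measurableSet_lt (hρ.comp ((measurable_fst).prodMk measurable_const))
      (ENNReal.measurable_ofReal.comp measurable_snd)
  -- measure bound on the slices
  have hmb : ∀ u ∈ Set.Ioo (0:ℝ) D,
      μ {x | ρ x y < ENNReal.ofReal u} ≤ ENNReal.ofReal (c * u ^ (m/k)) := by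
    intro u hu
    have ht0 : 0 < u ^ (1/k : ℝ) := Real.rpow_pos_of_pos hu.1 _
    have htδ : u ^ (1/k : ℝ) < δ₀ := by
      have h1 : u ^ (1/k:ℝ) < D ^ (1/k:ℝ) :=
        Real.rpow_lt_rpow hu.1.le hu.2 (by positivity)
      rwa [hDdef, ← Real.rpow_mul hδ₀.le, mul_one_div_cancel hk.ne', Real.rpow_one] at h1
    have hset : {x | ρ x y < ENNReal.ofReal u}
        = {x | (ρ x y) ^ (1/k) < ENNReal.ofReal (u ^ (1/k:ℝ))} := by
      ext x
      simp only [Set.mem_setOf_eq]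
      rw [← ENNReal.ofReal_rpow_of_pos hu.1,
        ENNReal.rpow_lt_rpow_iff (by positivity : (0:ℝ) < 1/k)]
    have hexp : (u ^ (1/k:ℝ)) ^ m = u ^ (m/k) := by
      rw [← Real.rpow_mul hu.1.le, one_div_mul_eq_div]
    calc μ {x | ρ x y < ENNReal.ofReal u}
        ≤ ENNReal.ofReal (c * (u ^ (1/k:ℝ)) ^ m) := by
          rw [hset]; exact hsub y _ ht0 htδ
      _ = ENNReal.ofReal (c * u ^ (m/k)) := by rw [hexp]
  -- main chain
  have hφcont : Continuous fun u : ℝ => s * Real.exp (-(s*u)) * (c * u ^ (m/k)) := by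
    refine hgcont.mul (continuous_const.mul ?_)
    refine continuous_iff_continuousAt.2 fun u => ?_
    exact Real.continuousAt_rpow_const u (m/k) (Or.inr (by positivity))
  have hφint : IntegrableOn (fun u : ℝ => s * Real.exp (-(s*u)) * (c * u ^ (m/k)))
      (Set.Ioo 0 D) volume :=
    (hφcont.integrableOn_Icc (a := 0) (b := D)).mono_set Set.Ioo_subset_Icc_self
  have step : (∫⁻ x, expNeg (ENNReal.ofReal s * ρ x y) ∂μ) ≤
      ENNReal.ofReal (∫ u in (0:ℝ)..D, s * Real.exp (-(s*u)) * (c * u ^ (m/k)))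
        + ENNReal.ofReal C := by
    calc (∫⁻ x, expNeg (ENNReal.ofReal s * ρ x y) ∂μ)
        ≤ ∫⁻ x, ((∫⁻ u in Set.Ioo 0 D, if ρ x y < ENNReal.ofReal u then g u else 0)
            + ENNReal.ofReal C) ∂μ := lintegral_mono key
      _ = (∫⁻ x, ∫⁻ u in Set.Ioo 0 D,
            (if ρ x y < ENNReal.ofReal u then g u else 0) ∂volume ∂μ)
            + ENNReal.ofReal C := by
          rw [lintegral_add_right _ measurable_const, lintegral_const, measure_univ, mul_one]
      _ = (∫⁻ u in Set.Ioo 0 D, ∫⁻ x,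
            (if ρ x y < ENNReal.ofReal u then g u else 0) ∂μ ∂volume)
            + ENNReal.ofReal C := by
          rw [lintegral_lintegral_swap hprodmeas.aemeasurable]
      _ = (∫⁻ u in Set.Ioo 0 D, g u * μ {x | ρ x y < ENNReal.ofReal u} ∂volume)
            + ENNReal.ofReal C := by
          congr 1
          refine lintegral_congr fun u => ?_
          have : (fun x => if ρ x y < ENNReal.ofReal u then g u else 0)
              = Set.indicator {x | ρ x y < ENNReal.ofReal u} (fun _ => g u) := by
            funext x; rw [Set.indicator_apply]; rfl
          rw [this, lintegral_indicator (measurableSet_lt hρy measurable_const) _,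
            setLIntegral_const]
      _ ≤ (∫⁻ u in Set.Ioo 0 D,
            ENNReal.ofReal (s * Real.exp (-(s*u)) * (c * u ^ (m/k))) ∂volume)
            + ENNReal.ofReal C := by
          refine add_le_add_left ?_ _
          refine setLIntegral_mono' measurableSet_Ioo fun u hu => ?_
          rw [ENNReal.ofReal_mul (hgnn u)]
          exact mul_le_mul_right (hmb u hu) _
      _ = ENNReal.ofReal (∫ u in (0:ℝ)..D, s * Real.exp (-(s*u)) * (c * u ^ (m/k)))
            + ENNReal.ofReal C := by
          congr 1
          rw [← ofReal_integral_eq_lintegral_ofReal hφint ?_]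
          · congr 1
            rw [intervalIntegral.integral_of_le hD.le, integral_Ioc_eq_integral_Ioo]
          · refine (ae_restrict_iff' measurableSet_Ioo).2
              (Filter.Eventually.of_forall fun u hu => ?_)
            exact mul_nonneg (hgnn u) (mul_nonneg hc.le (Real.rpow_nonneg hu.1.le _))
  -- identify the integral with the incomplete gamma expression
  have hid : (∫ u in (0:ℝ)..D, s * Real.exp (-(s*u)) * (c * u ^ (m/k)))
      = c * s ^ (-(m / k)) * (∫ u in (0:ℝ)..(s * D), u ^ (m / k) * Real.exp (-u)) := by
    have comp := intervalIntegral.integral_comp_mul_left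
      (f := fun v : ℝ => v ^ (m/k) * Real.exp (-v)) (a := 0) (b := D) (c := s) hs.ne'
    -- comp : ∫ u in 0..D, (s*u)^(m/k) * exp (-(s*u)) = s⁻¹ • ∫ v in s*0..s*D, v^(m/k)*exp (-v)
    have hcongr : (∫ u in (0:ℝ)..D, (fun v : ℝ => v ^ (m/k) * Real.exp (-v)) (s*u))
        = ∫ u in (0:ℝ)..D, s ^ (m/k) * (u ^ (m/k) * Real.exp (-(s*u))) := by
      refine intervalIntegral.integral_congr fun u hu => ?_
      have hu0 : 0 ≤ u := by
        rcases hu with ⟨h1, h2⟩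
        simpa [min_eq_left hD.le] using h1
      simp only
      rw [Real.mul_rpow hs.le hu0]
      ring
    rw [hcongr] at comp
    rw [intervalIntegral.integral_const_mul] at comp
    have hsne : s ^ (m/k) ≠ 0 := (Real.rpow_pos_of_pos hs _).ne'
    have hinv : s ^ (-(m/k)) = (s ^ (m/k))⁻¹ := Real.rpow_neg hs.le _
    have lhs_eq : (∫ u in (0:ℝ)..D, s * Real.exp (-(s*u)) * (c * u ^ (m/k)))
        = (c * s) * ∫ u in (0:ℝ)..D, u ^ (m/k) * Real.exp (-(s*u)) := by
      rw [← intervalIntegral.integral_const_mul]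
      refine intervalIntegral.integral_congr fun u hu => ?_
      ring
    rw [mul_zero, smul_eq_mul] at comp
    have comp2 : s ^ (m/k) * (∫ x in (0:ℝ)..D, x ^ (m/k) * Real.exp (-(s*x)))
        = s⁻¹ * ∫ x in (0:ℝ)..(s*D), x ^ (m/k) * Real.exp (-x) := comp
    field_simp at comp2
    rw [lhs_eq, hinv, ← comp2]
    field_simp
  calc (∫⁻ x, expNeg (ENNReal.ofReal s * ρ x y) ∂μ)
      ≤ ENNReal.ofReal (∫ u in (0:ℝ)..D, s * Real.exp (-(s*u)) * (c * u ^ (m/k)))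
        + ENNReal.ofReal C := step
    _ = ENNReal.ofReal
        (c * s ^ (-(m / k)) * (∫ u in (0:ℝ)..(s * D), u ^ (m / k) * Real.exp (-u)) + C) := by
        rw [← ENNReal.ofReal_add ?_ (Real.exp_pos _).le, hid]
        refine intervalIntegral.integral_nonneg hD.le fun u hu => ?_
        exact mul_nonneg (hgnn u) (mul_nonneg hc.le (Real.rpow_nonneg hu.1 _))
    _ ≤ _ := le_of_eq rfl
end

section
/- Let X be a random variable taking values in a σ-finite measure space (X,𝒳,μ) whose distribution μ_X satisfies μ_X ≪ μ and |h_μ(X)| < ∞, let (Y,𝒴) be a measurable space, and let ρ: X×Y → [0,∞] be a measurable distortion function. Let k ∈ (0,∞) and suppose μ is ρ^{1/k}-subregular of dimension m ∈ (0,∞) with subregularity constants c ∈ (0,∞) and δ₀ = ∞. Then for all D ∈ (0,∞), the Shannon-type lower bound R_X^{SLB}(D) = h_μ(X) − inf_{s≥0}( s·D + log( sup_{y∈Y} ∫ e^{-s·ρ(x,y)} dμ(x) ) ) satisfies R_X^{SLB}(D) ≥ h_μ(X) + F_{m,k,c}(D), where F_{m,k,c}(D) = log( (m/(kD))^{m/k}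 / (c·Γ(1+m/k)) ) − m/k. -/
open MeasureTheory
open scoped ENNReal Classical

/-- The Shannon lower bound `R_X^{SLB}(D) = h_μ(X) − inf_{s≥0}(s·D + log ν(s))`, where
`ν(s) = sup_y ∫ e^{-s·ρ(x,y)} dμ(x)` and `h` stands for the generalized entropy
`h_μ(X)`. -/
noncomputable def RSLB {X Y : Type*} [MeasurableSpace X] [MeasurableSpace Y]
    (μ : Measure X) (ρ : X → Y → ℝ≥0∞) (h D : ℝ) : EReal :=
  ((h : ℝ) : EReal)
    - sInf {e : EReal | ∃ s : ℝ, 0 ≤ s ∧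
        e = ((s * D : ℝ) : EReal)
          + elog (⨆ y : Y, ∫⁻ x, expNeg (ENNReal.ofReal s * ρ x y) ∂μ)}

/-- `F_{m,k,c}(D) = log((m/(kD))^{m/k}/(c·Γ(1+m/k))) − m/k`. -/
noncomputable def Fmkc (m k c D : ℝ) : ℝ :=
  Real.log ((m / (k * D)) ^ (m / k) / (c * Real.Gamma (1 + m / k))) - m / k

open Set Real

lemma image_exp_neg_mul {s : ℝ} (hs : 0 < s) :
    (fun x : ℝ => Real.exp (-(s * x))) '' Set.Ioi 0 = Set.Ioo 0 1 := by
  ext t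
  constructor
  · rintro ⟨x, hx, rfl⟩
    refine ⟨Real.exp_pos _, ?_⟩
    rw [Real.exp_lt_one_iff]
    have : (0:ℝ) < x := hx
    nlinarith
  · intro ht
    refine ⟨-Real.log t / s, div_pos (neg_pos.2 (Real.log_neg ht.1 ht.2)) hs, ?_⟩
    show Real.exp (-(s * (-Real.log t / s))) = t
    have : -(s * (-Real.log t / s)) = Real.log t := by field_simp
    rw [this, Real.exp_log ht.1]

lemma integral_neg_log_rpow {a s c : ℝ} (ha : 0 < a) (hs : 0 < s) (hc : 0 < c) :
    IntegrableOn (fun t : ℝ => c * ((-Real.log t) / s) ^ a) (Set.Ioo 0 1) ∧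
    ∫ t in Set.Ioo (0:ℝ) 1, c * ((-Real.log t) / s) ^ a
      = c * Real.Gamma (a + 1) * s ^ (-a) := by
  set f : ℝ → ℝ := fun x => Real.exp (-(s * x)) with hf
  have hderiv : ∀ x ∈ Ioi (0:ℝ), HasDerivWithinAt f (-s * f x) (Ioi 0) x := by
    intro x hx
    have h1 : HasDerivAt (fun x : ℝ => -(s * x)) (-s) x := by
      have h0 : HasDerivAt (fun y : ℝ => -(s * id y)) (-(s * 1)) x :=
        ((hasDerivAt_id x).const_mul s).neg
      simpa using h0
    have h2 : HasDerivAt f (Real.exp (-(s * x)) * -s) x := (Real.hasDerivAt_exp _).comp x h1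
    have : HasDerivAt f (-s * f x) x := by simpa [hf, mul_comm] using h2
    exact this.hasDerivWithinAt
  have hinj : Set.InjOn f (Ioi 0) := by
    intro u _ v _ h
    have := Real.exp_injective h
    have hs' : s ≠ 0 := hs.ne'
    field_simp at this
    linarith
  have himg := image_exp_neg_mul hs
  have hφf : ∀ x ∈ Ioi (0:ℝ),
      (c * s) * (x ^ a * Real.exp (-(s * x)))
        = |(-s * f x)| • (c * ((-Real.log (f x)) / s) ^ a) := by
    intro x hx
    have hfx : Real.log (f x) = -(s * x) := Real.log_exp _
    rw [smul_eq_mul, hfx, abs_of_nonpos (by nlinarith [Real.exp_pos (-(s*x))] : -s * f x ≤ 0)]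
    have hx' : -(-(s * x)) / s = x := by field_simp
    rw [hx']
    simp only [hf]
    ring
  have hI : IntegrableOn (fun x : ℝ => x ^ a * Real.exp (-(s * x))) (Ioi 0) := by
    have := integrableOn_rpow_mul_exp_neg_mul_rpow (show (-1:ℝ) < a by linarith) (p := 1) one_pos hs
    simpa [Real.rpow_one, neg_mul] using this
  constructor
  · rw [← himg, integrableOn_image_iff_integrableOn_abs_deriv_smul measurableSet_Ioi hderiv hinj]
    exact MeasureTheory.IntegrableOn.congr_fun (hI.const_mul (c * s)) hφf measurableSet_Ioi
  · rw [← himg, integral_image_eq_integral_abs_deriv_smul measurableSet_Ioi hderiv hinj,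
      ← setIntegral_congr_fun measurableSet_Ioi hφf, integral_const_mul]
    have hΓ : ∫ x in Ioi (0:ℝ), x ^ a * Real.exp (-(s * x)) = (1/s) ^ (a+1) * Real.Gamma (a+1) := by
      have := Real.integral_rpow_mul_exp_neg_mul_Ioi (show (0:ℝ) < a + 1 by linarith) hs
      simpa [add_sub_cancel_right] using this
    have h1 : (1/s) ^ (a+1) = s ^ (-(a+1)) := by
      rw [one_div, ← Real.rpow_neg_one s, ← Real.rpow_mul hs.le]
      norm_num
    rw [hΓ, h1,
      show c * s * (s ^ (-(a+1)) * Real.Gamma (a+1))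
          = c * Real.Gamma (a+1) * (s ^ (1:ℝ) * s ^ (-(a+1))) by rw [Real.rpow_one]; ring,
      ← Real.rpow_add hs]
    norm_num

lemma lintegral_expNeg_le {X : Type*} [MeasurableSpace X] (μ : Measure X)
    {Y : Type*} (ρ : X → Y → ℝ≥0∞) (y : Y) (hmeas : Measurable fun x => ρ x y)
    {k m c s a : ℝ} (hk : 0 < k) (hm : 0 < m) (hc : 0 < c) (hs : 0 < s)
    (ha : a = m / k)
    (hsub : ∀ t : ℝ, 0 < t →
      μ {x | (ρ x y) ^ (1 / k) < ENNReal.ofReal t} ≤ ENNReal.ofReal (c * t ^ m)) :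
    ∫⁻ x, expNeg (ENNReal.ofReal s * ρ x y) ∂μ
      ≤ ENNReal.ofReal (c * Real.Gamma (a + 1) * s ^ (-a)) := by
  have ha' : 0 < a := ha ▸ div_pos hm hk
  classical
  set g : X → ℝ := fun x => if ρ x y = ∞ then 0 else Real.exp (-(s * (ρ x y).toReal)) with hg
  have hgm : Measurable g := by
    refine Measurable.ite (hmeas (measurableSet_singleton ∞)) measurable_const ?_
    exact Real.measurable_exp.comp (((ENNReal.measurable_toReal.comp hmeas).const_mul s).neg)
  have hgnn : ∀ x, 0 ≤ g x := by
    intro x; rw [hg]; dsimp only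
    split_ifs
    · exact le_refl 0
    · exact (Real.exp_pos _).le
  have hg1 : ∀ x, g x ≤ 1 := by
    intro x; rw [hg]; dsimp only
    split_ifs
    · exact zero_le_one
    · exact Real.exp_le_one_iff.2 (neg_nonpos.2 (mul_nonneg hs.le ENNReal.toReal_nonneg))
  have step1 : ∀ x, expNeg (ENNReal.ofReal s * ρ x y) = ENNReal.ofReal (g x) := by
    intro x
    by_cases hρx : ρ x y = ∞
    · rw [hρx, ENNReal.mul_top (by simp [ENNReal.ofReal_eq_zero, not_le, hs]), expNeg, if_pos rfl]
      simp [hg, hρx]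
    · have hne : ENNReal.ofReal s * ρ x y ≠ ∞ := ENNReal.mul_ne_top ENNReal.ofReal_ne_top hρx
      rw [expNeg, if_neg hne, ENNReal.toReal_mul, ENNReal.toReal_ofReal hs.le]
      simp [hg, hρx]
  calc ∫⁻ x, expNeg (ENNReal.ofReal s * ρ x y) ∂μ
      = ∫⁻ x, ENNReal.ofReal (g x) ∂μ := lintegral_congr step1
    _ = ∫⁻ t in Ioi (0:ℝ), μ {x | t < g x} :=
        lintegral_eq_lintegral_meas_lt μ (Filter.Eventually.of_forall hgnn) hgm.aemeasurable
    _ ≤ ∫⁻ t in Ioi (0:ℝ),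
          (Set.Ioo (0:ℝ) 1).indicator (fun t => ENNReal.ofReal (c * ((-Real.log t) / s) ^ a)) t := by
        refine setLIntegral_mono' measurableSet_Ioi ?_
        intro t ht
        by_cases h01 : t < 1
        · have htIoo : t ∈ Set.Ioo (0:ℝ) 1 := ⟨ht, h01⟩
          rw [Set.indicator_of_mem htIoo]
          set u := (-Real.log t) / s with hu_def
          have hu : 0 < u := div_pos (neg_pos.2 (Real.log_neg ht h01)) hs
          have hsubset : {x | t < g x}
              ⊆ {x | (ρ x y) ^ (1 / k) < ENNReal.ofReal (u ^ (1 / k))} := by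
            intro x hx
            simp only [Set.mem_setOf_eq] at hx ⊢
            by_cases hρx : ρ x y = ∞
            · simp only [hg, hρx, if_pos] at hx
              exact absurd hx (not_lt.2 (le_of_lt ht))
            · have hx' : t < Real.exp (-(s * (ρ x y).toReal)) := by
                simpa [hg, hρx] using hx
              have hlog : Real.log t < -(s * (ρ x y).toReal) := (Real.log_lt_iff_lt_exp ht).2 hx'
              have h2 : (ρ x y).toReal < u := by
                rw [hu_def, lt_div_iff₀ hs]
                nlinarith
              have h3 : ρ x y < ENNReal.ofReal u := (ENNReal.lt_ofReal_iff_toReal_lt hρx).2 h2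
              have h4 := ENNReal.rpow_lt_rpow h3 (by positivity : (0:ℝ) < 1 / k)
              rwa [ENNReal.ofReal_rpow_of_pos hu] at h4
          refine le_trans (measure_mono hsubset) ?_
          refine le_trans (hsub _ (Real.rpow_pos_of_pos hu _)) ?_
          rw [← Real.rpow_mul hu.le, show 1 / k * m = a by rw [ha]; field_simp]
        · push_neg at h01
          have hempty : {x | t < g x} = ∅ := by
            ext x
            simp only [Set.mem_setOf_eq, Set.mem_empty_iff_false, iff_false, not_lt]
            exact (hg1 x).trans h01
          rw [hempty, measure_empty]
          exact bot_le
    _ = ∫⁻ t in Set.Ioo (0:ℝ) 1, ENNReal.ofReal (c * ((-Real.log t) / s) ^ a) := by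
        rw [lintegral_indicator measurableSet_Ioo, Measure.restrict_restrict measurableSet_Ioo,
          Set.inter_eq_self_of_subset_left Set.Ioo_subset_Ioi_self]
    _ ≤ ENNReal.ofReal (c * Real.Gamma (a + 1) * s ^ (-a)) := by
        obtain ⟨hint, hval⟩ := integral_neg_log_rpow ha' hs hc
        rw [← hval, ← ofReal_integral_eq_lintegral_ofReal hint ?_]
        refine (ae_restrict_iff' measurableSet_Ioo).2 (Filter.Eventually.of_forall ?_)
        intro t ht
        have : 0 ≤ (-Real.log t) / s := div_nonneg (neg_nonneg.2 (Real.log_nonpos ht.1.le ht.2.le)) hs.le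
        positivity


/-- If `μ` is σ-finite, `μ_X ≪ μ` with finite generalized entropy
`h_μ(X) = −∫ log(dμ_X/dμ) dμ_X`, and `μ` is `ρ^{1/k}`-subregular of dimension `m` with
constants `c` and `δ₀ = ∞`, then `R_X^{SLB}(D) ≥ h_μ(X) + F_{m,k,c}(D)` for all
`D ∈ (0,∞)`. -/
theorem RSLB_ge_of_subregular_inf
    {X Y : Type*} [MeasurableSpace X] [MeasurableSpace Y]
    (μ : Measure X) [SigmaFinite μ] (μX : Measure X) [IsProbabilityMeasure μX]
    (hac : μX ≪ μ)
    (hent : Integrable (fun x => Real.log ((μX.rnDeriv μ x).toReal)) μX)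
    (ρ : X → Y → ℝ≥0∞) (hρ : Measurable (Function.uncurry ρ))
    (k m c : ℝ) (hk : 0 < k) (hm : 0 < m) (hc : 0 < c)
    (hsub : ∀ y : Y, ∀ t : ℝ, 0 < t →
      μ {x | (ρ x y) ^ (1 / k) < ENNReal.ofReal t} ≤ ENNReal.ofReal (c * t ^ m)) :
    ∀ D : ℝ, 0 < D →
      (((-(∫ x, Real.log ((μX.rnDeriv μ x).toReal) ∂μX)
          + Fmkc m k c D : ℝ)) : EReal)
        ≤ RSLB μ ρ (-(∫ x, Real.log ((μX.rnDeriv μ x).toReal) ∂μX)) D := by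
  intro D hD
  set h0 : ℝ := -(∫ x, Real.log ((μX.rnDeriv μ x).toReal) ∂μX) with hh0
  set a : ℝ := m / k with ha
  set s : ℝ := m / (k * D) with hsdef
  have ha' : 0 < a := div_pos hm hk
  have hs : 0 < s := div_pos hm (mul_pos hk hD)
  have hΓ : 0 < Real.Gamma (a + 1) := Real.Gamma_pos_of_pos (by linarith)
  set K : ℝ := c * Real.Gamma (a + 1) * s ^ (-a) with hK
  have hKpos : 0 < K := mul_pos (mul_pos hc hΓ) (Real.rpow_pos_of_pos hs _)
  set ν : ℝ≥0∞ := ⨆ y : Y, ∫⁻ x, expNeg (ENNReal.ofReal s * ρ x y) ∂μ with hν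
  have hνle : ν ≤ ENNReal.ofReal K := by
    refine iSup_le fun y => ?_
    have hmeas : Measurable fun x => ρ x y :=
      hρ.comp (measurable_prodMk_right)
    exact lintegral_expNeg_le μ ρ y hmeas hk hm hc hs ha (hsub y)
  have hνtop : ν ≠ ∞ := fun h => by
    rw [h] at hνle
    exact absurd hνle (by simp)
  have helog : elog ν ≤ ((Real.log K : ℝ) : EReal) := by
    by_cases h1 : ν = 0
    · simp [elog, h1]
    · rw [elog, if_neg h1, if_neg hνtop]
      exact EReal.coe_le_coe_iff.2 (Real.log_le_log (ENNReal.toReal_pos h1 hνtop)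
        (ENNReal.toReal_le_of_le_ofReal hKpos.le hνle))
  have hmem : (((s * D : ℝ)) : EReal) + elog ν ∈
      {e : EReal | ∃ s' : ℝ, 0 ≤ s' ∧
        e = ((s' * D : ℝ) : EReal)
          + elog (⨆ y : Y, ∫⁻ x, expNeg (ENNReal.ofReal s' * ρ x y) ∂μ)} :=
    ⟨s, hs.le, rfl⟩
  have hkey : s * D + Real.log K = -(Fmkc m k c D) := by
    rw [Fmkc]
    have h1 : m / (k * D) = s := rfl
    have hsD : s * D = a := by
      rw [hsdef, ha]; field_simp
    have h2 : Real.log ((m / (k * D)) ^ (m / k) / (c * Real.Gamma (1 + m / k)))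
        = a * Real.log s - Real.log (c * Real.Gamma (a + 1)) := by
      rw [h1, ← ha, add_comm 1 a,
        Real.log_div (by positivity) (by positivity), Real.log_rpow hs]
    rw [h2, hK, Real.log_mul (by positivity) (by positivity),
      Real.log_mul hc.ne' hΓ.ne', Real.log_rpow hs, hsD]
    ring
  have hsinf : sInf {e : EReal | ∃ s' : ℝ, 0 ≤ s' ∧
        e = ((s' * D : ℝ) : EReal)
          + elog (⨆ y : Y, ∫⁻ x, expNeg (ENNReal.ofReal s' * ρ x y) ∂μ)}
      ≤ ((-(Fmkc m k c D) : ℝ) : EReal) := by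
    refine le_trans (sInf_le hmem) ?_
    calc ((s * D : ℝ) : EReal) + elog ν
        ≤ ((s * D : ℝ) : EReal) + ((Real.log K : ℝ) : EReal) := add_le_add le_rfl helog
      _ = ((s * D + Real.log K : ℝ) : EReal) := by rw [EReal.coe_add]
      _ = ((-(Fmkc m k c D) : ℝ) : EReal) := by rw [hkey]
  rw [RSLB]
  calc ((h0 + Fmkc m k c D : ℝ) : EReal)
      = ((h0 : ℝ) : EReal) - ((-(Fmkc m k c D) : ℝ) : EReal) := by
        rw [show h0 + Fmkc m k c D = h0 - (-(Fmkc m k c D)) by ring, EReal.coe_sub]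
    _ ≤ _ := EReal.sub_le_sub le_rfl hsinf
end

section
/- Let X be a random variable taking values in a σ-finite measure space (X,𝒳,μ) whose distribution μ_X satisfies μ_X ≪ μ and |h_μ(X)| < ∞, let (Y,𝒴) be a measurable space, and let ρ: X×Y → [0,∞] be a measurable distortion function. Let k ∈ (0,∞) and suppose μ is ρ^{1/k}-subregular of dimension m ∈ (0,∞) with subregularity constants c ∈ (0,∞) and δ₀ ∈ (0,∞), and that μ(X) = 1. Define R_X^L(D) = h_μ(X) − m/k − log( c·(m/(kD))^{-m/k}·Γ(1+m/k) + e^{-m·δ₀^k/(kD)} ). Then: (a) the Shannon-type lower bound R_X^{SLB}(D) = h_μ(X) − inf_{s≥0}( s·D + log( sup_{y∈Y} ∫ e^{-s·ρ(x,y)} dμ(x) ) ) satisfies R_X^{SLB}(D) ≥ R_X^L(D) for all D ∈ (0,∞); (b) R_X^L(D) < h_μ(X) + F_{m,k,c}(D) for all D ∈ (0,∞); and (c) lim_{D→0} ( R_X^L(D) − h_μ(X) − F_{m,k,c}(D) ) = 0, where F_{m,k,c}(D) = log( (m/(kD))^{m/k} / (c·Γ(1+m/k)) ) − m/k. -/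
open MeasureTheory Filter Topology
open scoped ENNReal Classical
open Set

/-- The explicit lower bound
`R_X^L(D) = h − m/k − log(c·(m/(kD))^{-m/k}·Γ(1+m/k) + e^{-m·δ₀^k/(kD)})`, where `h`
stands for the generalized entropy `h_μ(X)`. -/
noncomputable def RL (h m k c δ₀ D : ℝ) : ℝ :=
  h - m / k
    - Real.log (c * (m / (k * D)) ^ (-(m / k)) * Real.Gamma (1 + m / k)
        + Real.exp (-(m * δ₀ ^ k / (k * D))))

private lemma exp_neg_deriv : ∀ x ∈ Ioi (0:ℝ),
    HasDerivWithinAt (fun x => Real.exp (-x)) (-Real.exp (-x)) (Ioi 0) x := by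
  intro x _
  simpa [mul_neg_one, Function.comp_def] using
    (((Real.hasDerivAt_exp (-x)).comp x (hasDerivAt_neg x))).hasDerivWithinAt

private lemma exp_neg_inj : InjOn (fun x : ℝ => Real.exp (-x)) (Ioi 0) :=
  (Real.exp_injective.comp neg_injective).injOn

private lemma exp_neg_image : (fun x : ℝ => Real.exp (-x)) '' Ioi 0 = Ioo 0 1 := by
  ext t
  constructor
  · rintro ⟨x, hx, rfl⟩
    exact ⟨Real.exp_pos _, by rw [Real.exp_lt_one_iff]; simpa using hx.out⟩
  · rintro ⟨ht0, ht1⟩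
    exact ⟨-Real.log t, by simpa using Real.log_neg ht0 ht1, by simp [Real.exp_log ht0]⟩

private lemma abs_smul_eq (a : ℝ) : ∀ x : ℝ,
    |(-Real.exp (-x))| • (-Real.log (Real.exp (-x))) ^ a = Real.exp (-x) * x ^ a := by
  intro x
  rw [Real.log_exp, neg_neg, abs_neg, abs_of_pos (Real.exp_pos _), smul_eq_mul]

private lemma neglog_integrableOn (a : ℝ) (ha : 0 < a) :
    IntegrableOn (fun t => (-Real.log t) ^ a) (Ioo (0:ℝ) 1) := by
  have h1 := integrableOn_image_iff_integrableOn_abs_deriv_smul measurableSet_Ioi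
    exp_neg_deriv exp_neg_inj (fun t => (-Real.log t) ^ a)
  rw [exp_neg_image] at h1
  rw [h1]
  have h2 := Real.GammaIntegral_convergent (by linarith : (0:ℝ) < a + 1)
  simpa [abs_smul_eq a, add_sub_cancel_right] using h2

private lemma neglog_integral (a : ℝ) (ha : 0 < a) :
    ∫ t in Ioo (0:ℝ) 1, (-Real.log t) ^ a = Real.Gamma (a + 1) := by
  rw [← exp_neg_image, integral_image_eq_integral_abs_deriv_smul measurableSet_Ioi
    exp_neg_deriv exp_neg_inj]
  rw [Real.Gamma_eq_integral (by linarith : (0:ℝ) < a + 1)]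
  simp [abs_smul_eq a, add_sub_cancel_right]


private lemma key_bound {X Y : Type*} [MeasurableSpace X] [MeasurableSpace Y]
    (μ : Measure X) [IsProbabilityMeasure μ]
    (ρ : X → Y → ℝ≥0∞) (hρ : Measurable (Function.uncurry ρ))
    (k m c δ₀ : ℝ) (hk : 0 < k) (hm : 0 < m) (hc : 0 < c) (hδ₀ : 0 < δ₀)
    (hsub : ∀ y : Y, ∀ t : ℝ, 0 < t → t < δ₀ →
      μ {x | (ρ x y) ^ (1 / k) < ENNReal.ofReal t} ≤ ENNReal.ofReal (c * t ^ m))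
    (s : ℝ) (hs : 0 < s) (y : Y) :
    ∫⁻ x, expNeg (ENNReal.ofReal s * ρ x y) ∂μ ≤
      ENNReal.ofReal (c * s ^ (-(m/k)) * Real.Gamma (1 + m/k) + Real.exp (-(s * δ₀ ^ k))) := by
  set a : ℝ := m / k with ha_def
  have ha : 0 < a := div_pos hm hk
  set Eδ : ℝ := Real.exp (-(s * δ₀ ^ k)) with hEδ_def
  have hEδ0 : 0 < Eδ := Real.exp_pos _
  have hEδ1 : Eδ < 1 := by
    rw [hEδ_def, Real.exp_lt_one_iff]
    have : 0 < δ₀ ^ k := Real.rpow_pos_of_pos hδ₀ k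
    nlinarith
  have hρy : Measurable fun x => ρ x y := hρ.comp (measurable_id.prodMk measurable_const)
  set f : X → ℝ := fun x => if ρ x y = ∞ then 0 else Real.exp (-(s * (ρ x y).toReal)) with hf_def
  have hf_eq : ∀ x, expNeg (ENNReal.ofReal s * ρ x y) = ENNReal.ofReal (f x) := by
    intro x
    by_cases hx : ρ x y = ∞
    · have hmt : ENNReal.ofReal s * ρ x y = ∞ := by
        rw [hx, ENNReal.mul_top]
        simpa [ENNReal.ofReal_eq_zero] using hs
      rw [hx] at hmt
      simp [expNeg, hf_def, hx, hmt]
    · have hmul : ENNReal.ofReal s * ρ x y ≠ ∞ := ENNReal.mul_ne_top ENNReal.ofReal_ne_top hx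
      simp [expNeg, hf_def, hx, hmul, ENNReal.toReal_mul, ENNReal.toReal_ofReal hs.le]
  have hf_mble : Measurable f := by
    refine Measurable.ite (hρy (measurableSet_singleton ∞)) measurable_const ?_
    exact Real.measurable_exp.comp ((hρy.ennreal_toReal.const_mul s).neg)
  have hf_nn : ∀ x, 0 ≤ f x := by
    intro x; rw [hf_def]; dsimp only; split <;> positivity
  have hf_le1 : ∀ x, f x ≤ 1 := by
    intro x; rw [hf_def]; dsimp only; split
    · norm_num
    · rw [Real.exp_le_one_iff]
      have := ENNReal.toReal_nonneg (a := ρ x y); nlinarith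
  -- the bounding function
  set B : ℝ → ℝ≥0∞ := fun t =>
    (Ioc (0:ℝ) Eδ).indicator (fun _ => (1:ℝ≥0∞)) t
      + (Ioo Eδ 1).indicator (fun t => ENNReal.ofReal (c * ((-Real.log t) / s) ^ a)) t
    with hB_def
  have hg2_mble : Measurable fun t : ℝ => ENNReal.ofReal (c * ((-Real.log t) / s) ^ a) :=
    ((((Real.continuous_rpow_const ha.le).measurable.comp (Real.measurable_log.neg.div_const s)).const_mul c).ennreal_ofReal)
  have hB_mble : Measurable B :=
    (((measurable_const.indicator measurableSet_Ioc))).add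
      (hg2_mble.indicator measurableSet_Ioo)
  have hmeas_bound : ∀ t ∈ Ioi (0:ℝ), μ {x | t < f x} ≤ B t := by
    intro t ht
    have ht0 : 0 < t := ht
    rcases le_or_gt t Eδ with htE | htE
    · calc μ {x | t < f x} ≤ 1 := prob_le_one
        _ ≤ B t := by
          rw [hB_def]
          refine le_add_right ?_
          rw [indicator_of_mem (Set.mem_Ioc.mpr ⟨ht0, htE⟩)]
    rcases lt_or_ge t 1 with ht1 | ht1
    · -- main regime
      set L : ℝ := (-Real.log t) / s with hL_def
      have hlogt : Real.log t < 0 := Real.log_neg ht0 ht1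
      have hL0 : 0 < L := div_pos (by linarith) hs
      have hLδ : L < δ₀ ^ k := by
        have : -(s * δ₀ ^ k) < Real.log t := by
          rw [← Real.exp_lt_exp, Real.exp_log ht0]; exact htE
        rw [hL_def, div_lt_iff₀ hs]
        nlinarith
      set t' : ℝ := L ^ (1/k) with ht'_def
      have ht'0 : 0 < t' := Real.rpow_pos_of_pos hL0 _
      have ht'δ : t' < δ₀ := by
        have h1 : t' < (δ₀ ^ k) ^ (1/k) :=
          Real.rpow_lt_rpow hL0.le hLδ (by positivity)
        have h2 : (δ₀ ^ k) ^ (1/k) = δ₀ := by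
          rw [← Real.rpow_mul hδ₀.le, mul_one_div, div_self hk.ne', Real.rpow_one]
        rwa [h2] at h1
      have hsubset : {x | t < f x} ⊆ {x | (ρ x y) ^ (1/k) < ENNReal.ofReal t'} := by
        intro x hx
        simp only [Set.mem_setOf_eq] at hx ⊢
        by_cases hxtop : ρ x y = ∞
        · rw [hf_def] at hx; simp [hxtop] at hx; linarith
        · have hx' : t < Real.exp (-(s * (ρ x y).toReal)) := by
            rw [hf_def] at hx; simpa [hxtop] using hx
          have hlt : (ρ x y).toReal < L := by
            have := (Real.log_lt_iff_lt_exp ht0).mpr hx'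
            rw [hL_def, lt_div_iff₀ hs]
            nlinarith
          have hρlt : ρ x y < ENNReal.ofReal L := by
            rw [← ENNReal.ofReal_toReal hxtop]
            exact ENNReal.ofReal_lt_ofReal_iff hL0 |>.mpr hlt
          calc (ρ x y) ^ (1/k) < (ENNReal.ofReal L) ^ (1/k) :=
                ENNReal.rpow_lt_rpow hρlt (by positivity)
            _ = ENNReal.ofReal t' := by
                rw [ht'_def, ← ENNReal.ofReal_rpow_of_pos hL0]
      have hmain : μ {x | t < f x} ≤ ENNReal.ofReal (c * ((-Real.log t) / s) ^ a) := by
        refine le_trans (measure_mono hsubset) (le_trans (hsub y t' ht'0 ht'δ) ?_)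
        have : t' ^ m = L ^ a := by
          rw [ht'_def, ← Real.rpow_mul hL0.le, ha_def]
          congr 1; field_simp
        rw [this]
      calc μ {x | t < f x} ≤ ENNReal.ofReal (c * ((-Real.log t) / s) ^ a) := hmain
        _ ≤ B t := by
          rw [hB_def]
          refine le_add_left ?_
          rw [indicator_of_mem (Set.mem_Ioo.mpr ⟨htE, ht1⟩)]
    · -- t ≥ 1: empty set
      have : {x | t < f x} = ∅ := by
        ext x; simp only [Set.mem_setOf_eq, Set.mem_empty_iff_false, iff_false, not_lt]
        exact le_trans (hf_le1 x) ht1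
      rw [this]; simp
  -- compute the integral of B
  have hInt2 : ∫⁻ t in Ioo (0:ℝ) 1, ENNReal.ofReal (c * ((-Real.log t) / s) ^ a)
      = ENNReal.ofReal (c * s ^ (-a) * Real.Gamma (1 + a)) := by
    have hcongr : ∀ t ∈ Ioo (0:ℝ) 1,
        ENNReal.ofReal (c * ((-Real.log t) / s) ^ a)
          = ENNReal.ofReal ((c / s ^ a) * (-Real.log t) ^ a) := by
      intro t ht
      congr 1
      rw [Real.div_rpow (by nlinarith [Real.log_nonpos ht.1.le ht.2.le] : (0:ℝ) ≤ -Real.log t) hs.le]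
      ring
    rw [setLIntegral_congr_fun measurableSet_Ioo hcongr]
    rw [← ofReal_integral_eq_lintegral_ofReal
      ((neglog_integrableOn a ha).const_mul _)
      (by
        filter_upwards [ae_restrict_mem measurableSet_Ioo] with t ht
        have := Real.log_nonpos ht.1.le ht.2.le
        have h2 : (0:ℝ) ≤ (-Real.log t) ^ a := Real.rpow_nonneg (by linarith) a
        positivity)]
    rw [integral_const_mul, neglog_integral a ha]
    congr 1
    rw [Real.rpow_neg hs.le, add_comm]
    field_simp
  calc ∫⁻ x, expNeg (ENNReal.ofReal s * ρ x y) ∂μ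
      = ∫⁻ x, ENNReal.ofReal (f x) ∂μ := lintegral_congr hf_eq
    _ = ∫⁻ t in Ioi (0:ℝ), μ {x | t < f x} := by
        exact lintegral_eq_lintegral_meas_lt μ (ae_of_all _ hf_nn) hf_mble.aemeasurable
    _ ≤ ∫⁻ t in Ioi (0:ℝ), B t := setLIntegral_mono hB_mble hmeas_bound
    _ ≤ ∫⁻ t, B t := setLIntegral_le_lintegral _ _
    _ = volume (Ioc (0:ℝ) Eδ) + ∫⁻ t in Ioo Eδ 1, ENNReal.ofReal (c * ((-Real.log t) / s) ^ a) := by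
        rw [hB_def, lintegral_add_left ((measurable_const.indicator measurableSet_Ioc)),
          lintegral_indicator measurableSet_Ioc _, lintegral_indicator measurableSet_Ioo _]
        simp
    _ ≤ ENNReal.ofReal Eδ + ENNReal.ofReal (c * s ^ (-a) * Real.Gamma (1 + a)) := by
        refine add_le_add ?_ ?_
        · rw [Real.volume_Ioc, sub_zero]
        · rw [← hInt2]
          exact lintegral_mono_set (Ioo_subset_Ioo hEδ0.le le_rfl)
    _ = ENNReal.ofReal (c * s ^ (-a) * Real.Gamma (1 + a) + Eδ) := by
        rw [← ENNReal.ofReal_add hEδ0.le (by positivity 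
          )]
        · rw [add_comm]
    _ = ENNReal.ofReal (c * s ^ (-(m/k)) * Real.Gamma (1 + m/k) + Real.exp (-(s * δ₀ ^ k))) := rfl

private lemma elog_le_log {x : ℝ≥0∞} {w : ℝ} (hw : 0 < w) (hx : x ≤ ENNReal.ofReal w) :
    elog x ≤ ((Real.log w : ℝ) : EReal) := by
  rcases eq_or_ne x 0 with rfl | hx0
  · simp [elog]
  rcases eq_or_ne x ∞ with rfl | hxt
  · exact absurd ((hx.trans_lt ENNReal.ofReal_lt_top).ne) (by simp)
  · simp only [elog, hx0, hxt, if_false]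
    exact EReal.coe_le_coe_iff.mpr
      (Real.log_le_log (ENNReal.toReal_pos hx0 hxt) (ENNReal.toReal_le_of_le_ofReal hw.le hx))

private lemma RL_sub_eq (h m k c δ₀ : ℝ) (hk : 0 < k) (hm : 0 < m) (hc : 0 < c) {D : ℝ}
    (hD : 0 < D) :
    RL h m k c δ₀ D - h - Fmkc m k c D =
      Real.log (c * (m / (k * D)) ^ (-(m / k)) * Real.Gamma (1 + m / k))
        - Real.log (c * (m / (k * D)) ^ (-(m / k)) * Real.Gamma (1 + m / k)
            + Real.exp (-(m * δ₀ ^ k / (k * D)))) := by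
  have hG : 0 < Real.Gamma (1 + m / k) := Real.Gamma_pos_of_pos (by positivity)
  have hx : 0 < m / (k * D) := by positivity
  have hP : 0 < (m / (k * D)) ^ (m / k) := Real.rpow_pos_of_pos hx _
  have hneg : (m / (k * D)) ^ (-(m / k)) = ((m / (k * D)) ^ (m / k))⁻¹ :=
    Real.rpow_neg hx.le _
  rw [RL, Fmkc, hneg,
    Real.log_div hP.ne' (mul_pos hc hG).ne',
    Real.log_mul (mul_ne_zero hc.ne' (inv_ne_zero hP.ne')) hG.ne',
    Real.log_mul hc.ne' (inv_ne_zero hP.ne'), Real.log_inv,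
    Real.log_mul hc.ne' hG.ne']
  ring

/-- If `μ` is a probability measure, `μ_X ≪ μ` with finite generalized
entropy `h = h_μ(X)`, and `μ` is `ρ^{1/k}`-subregular of dimension `m` with constants
`c ∈ (0,∞)` and `δ₀ ∈ (0,∞)`, then (a) `R_X^{SLB}(D) ≥ R_X^L(D)` for all `D ∈ (0,∞)`;
(b) `R_X^L(D) < h + F_{m,k,c}(D)` for all `D ∈ (0,∞)`; and
(c) `R_X^L(D) − h − F_{m,k,c}(D) → 0` as `D → 0⁺`. -/
theorem RSLB_ge_RL_of_subregular
    {X Y : Type*} [MeasurableSpace X] [MeasurableSpace Y]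
    (μ : Measure X) [IsProbabilityMeasure μ] (μX : Measure X) [IsProbabilityMeasure μX]
    (hac : μX ≪ μ)
    (hent : Integrable (fun x => Real.log ((μX.rnDeriv μ x).toReal)) μX)
    (ρ : X → Y → ℝ≥0∞) (hρ : Measurable (Function.uncurry ρ))
    (k m c δ₀ : ℝ) (hk : 0 < k) (hm : 0 < m) (hc : 0 < c) (hδ₀ : 0 < δ₀)
    (hsub : ∀ y : Y, ∀ t : ℝ, 0 < t → t < δ₀ →
      μ {x | (ρ x y) ^ (1 / k) < ENNReal.ofReal t} ≤ ENNReal.ofReal (c * t ^ m))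
    (h : ℝ) (hh : h = -(∫ x, Real.log ((μX.rnDeriv μ x).toReal) ∂μX)) :
    (∀ D : ℝ, 0 < D → ((RL h m k c δ₀ D : ℝ) : EReal) ≤ RSLB μ ρ h D) ∧
    (∀ D : ℝ, 0 < D → RL h m k c δ₀ D < h + Fmkc m k c D) ∧
    Tendsto (fun D : ℝ => RL h m k c δ₀ D - h - Fmkc m k c D) (𝓝[>] 0) (𝓝 0) := by
  have hG : 0 < Real.Gamma (1 + m / k) := Real.Gamma_pos_of_pos (by positivity)
  refine ⟨?_, ?_, ?_⟩
  · -- (a)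
    intro D hD
    have hkD : 0 < k * D := mul_pos hk hD
    have hs : 0 < m / (k * D) := div_pos hm hkD
    have hW : 0 < c * (m / (k * D)) ^ (-(m / k)) * Real.Gamma (1 + m / k)
        + Real.exp (-(m * δ₀ ^ k / (k * D))) :=
      add_pos (mul_pos (mul_pos hc (Real.rpow_pos_of_pos hs _)) hG) (Real.exp_pos _)
    have hbound : (⨆ y : Y, ∫⁻ x, expNeg (ENNReal.ofReal (m / (k * D)) * ρ x y) ∂μ)
        ≤ ENNReal.ofReal (c * (m / (k * D)) ^ (-(m / k)) * Real.Gamma (1 + m / k)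
            + Real.exp (-(m * δ₀ ^ k / (k * D)))) := by
      refine iSup_le fun y => le_trans
        (key_bound μ ρ hρ k m c δ₀ hk hm hc hδ₀ hsub _ hs y) ?_
      have harg : (m / (k * D)) * δ₀ ^ k = m * δ₀ ^ k / (k * D) := by ring
      rw [harg]
    have hmem : (((m / (k * D)) * D : ℝ) : EReal)
        + elog (⨆ y : Y, ∫⁻ x, expNeg (ENNReal.ofReal (m / (k * D)) * ρ x y) ∂μ)
        ∈ {e : EReal | ∃ s : ℝ, 0 ≤ s ∧
            e = ((s * D : ℝ) : EReal)
              + elog (⨆ y : Y, ∫⁻ x, expNeg (ENNReal.ofReal s * ρ x y) ∂μ)} :=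
      ⟨m / (k * D), hs.le, rfl⟩
    have h1 := sInf_le hmem
    have h2 : (((m / (k * D)) * D : ℝ) : EReal)
        + elog (⨆ y : Y, ∫⁻ x, expNeg (ENNReal.ofReal (m / (k * D)) * ρ x y) ∂μ)
        ≤ (((m / (k * D)) * D + Real.log (c * (m / (k * D)) ^ (-(m / k)) *
            Real.Gamma (1 + m / k) + Real.exp (-(m * δ₀ ^ k / (k * D)))) : ℝ) : EReal) := by
      rw [EReal.coe_add]
      exact add_le_add le_rfl (elog_le_log hW hbound)
    rw [RSLB]
    refine le_trans ?_ (EReal.sub_le_sub (le_refl ((h : ℝ) : EReal)) (le_trans h1 h2))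
    rw [← EReal.coe_sub, EReal.coe_le_coe_iff]
    have hmkD : m / (k * D) * D = m / k := by field_simp
    rw [RL, hmkD]
    linarith
  · -- (b)
    intro D hD
    have heq := RL_sub_eq h m k c δ₀ hk hm hc hD
    have hx : 0 < m / (k * D) := by positivity
    have hQ : 0 < c * (m / (k * D)) ^ (-(m / k)) * Real.Gamma (1 + m / k) :=
      mul_pos (mul_pos hc (Real.rpow_pos_of_pos hx _)) hG
    have hE : 0 < Real.exp (-(m * δ₀ ^ k / (k * D))) := Real.exp_pos _
    have hlt := Real.log_lt_log hQ (by linarith :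
      c * (m / (k * D)) ^ (-(m / k)) * Real.Gamma (1 + m / k)
        < c * (m / (k * D)) ^ (-(m / k)) * Real.Gamma (1 + m / k)
            + Real.exp (-(m * δ₀ ^ k / (k * D))))
    linarith
  · -- (c)
    have hv : Tendsto (fun D : ℝ => m / (k * D)) (𝓝[>] 0) atTop := by
      refine (tendsto_inv_nhdsGT_zero.const_mul_atTop (div_pos hm hk)).congr fun D => ?_
      field_simp
    have hb : 0 < δ₀ ^ k := Real.rpow_pos_of_pos hδ₀ k
    have hr : Tendsto (fun D : ℝ => (1 / (c * Real.Gamma (1 + m / k))) *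
        ((m / (k * D)) ^ (m / k) * Real.exp (-(δ₀ ^ k) * (m / (k * D)))))
        (𝓝[>] 0) (𝓝 0) := by
      have h0 := (tendsto_rpow_mul_exp_neg_mul_atTop_nhds_zero (m / k) (δ₀ ^ k) hb).comp hv
      simpa using h0.const_mul (1 / (c * Real.Gamma (1 + m / k)))
    have hlog : Tendsto (fun D : ℝ => -Real.log (1 + (1 / (c * Real.Gamma (1 + m / k))) *
        ((m / (k * D)) ^ (m / k) * Real.exp (-(δ₀ ^ k) * (m / (k * D))))))
        (𝓝[>] 0) (𝓝 0) := by
      have h1 : Tendsto (fun D : ℝ => 1 + (1 / (c * Real.Gamma (1 + m / k))) *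
          ((m / (k * D)) ^ (m / k) * Real.exp (-(δ₀ ^ k) * (m / (k * D)))))
          (𝓝[>] 0) (𝓝 1) := by
        simpa using tendsto_const_nhds.add hr
      have h2 := ((Real.continuousAt_log one_ne_zero).tendsto.comp h1)
      simp only [Real.log_one] at h2
      simpa using h2.neg
    refine hlog.congr' ?_
    filter_upwards [self_mem_nhdsWithin] with D hD
    have hD : 0 < D := hD
    have hx : 0 < m / (k * D) := by positivity
    have hP : 0 < (m / (k * D)) ^ (m / k) := Real.rpow_pos_of_pos hx _
    have hneg : (m / (k * D)) ^ (-(m / k)) = ((m / (k * D)) ^ (m / k))⁻¹ :=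
      Real.rpow_neg hx.le _
    have hQ : 0 < c * (m / (k * D)) ^ (-(m / k)) * Real.Gamma (1 + m / k) :=
      mul_pos (mul_pos hc (Real.rpow_pos_of_pos hx _)) hG
    have hE : 0 < Real.exp (-(m * δ₀ ^ k / (k * D))) := Real.exp_pos _
    have hrD : (1 / (c * Real.Gamma (1 + m / k))) *
        ((m / (k * D)) ^ (m / k) * Real.exp (-(δ₀ ^ k) * (m / (k * D))))
        = Real.exp (-(m * δ₀ ^ k / (k * D)))
            / (c * (m / (k * D)) ^ (-(m / k)) * Real.Gamma (1 + m / k)) := by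
      rw [show -(δ₀ ^ k) * (m / (k * D)) = -(m * δ₀ ^ k / (k * D)) by ring, hneg]
      field_simp
    rw [hrD, RL_sub_eq h m k c δ₀ hk hm hc hD]
    rw [show (1 : ℝ) + Real.exp (-(m * δ₀ ^ k / (k * D)))
          / (c * (m / (k * D)) ^ (-(m / k)) * Real.Gamma (1 + m / k))
        = (c * (m / (k * D)) ^ (-(m / k)) * Real.Gamma (1 + m / k)
            + Real.exp (-(m * δ₀ ^ k / (k * D))))
          / (c * (m / (k * D)) ^ (-(m / k)) * Real.Gamma (1 + m / k))
      by rw [add_div, div_self hQ.ne']]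
    rw [Real.log_div (by positivity) hQ.ne', neg_sub]
end

section
/- Let X be a random variable taking values in a σ-finite measure space (X,𝒳,μ) whose distribution μ_X satisfies μ_X ≪ μ and |h_μ(X)| < ∞, let (Y,𝒴) be a measurable space, and let ρ: X×Y → [0,∞] be a measurable distortion function. Let k ∈ (0,∞), suppose μ is ρ^{1/k}-subregular of dimension m ∈ (0,∞) with subregularity constants c ∈ (0,∞) and δ₀ ∈ (0,∞], and assume μ(X) = 1 if δ₀ < ∞. Then the lower rate-distortion dimension of order k satisfies liminf_{D→0} R_X(D^k)/log(1/D) ≥ m, where R_X(D) is the rate-distortion function. -/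
open MeasureTheory Filter Topology
open scoped ENNReal Classical

/-- The Kullback–Leibler divergence `D_KL(π‖λ) = ∫ log(dπ/dλ) dπ` if `π ≪ λ` (and the
integral makes sense), and `∞` otherwise.  Since the divergences arising in the
rate-distortion function are mutual informations (hence nonnegative), we record the value
in `ℝ≥0∞` by truncating at `0`. -/
noncomputable def klDivNN {Z : Type*} [MeasurableSpace Z] (π lam : Measure Z) : ℝ≥0∞ :=
  if π ≪ lam ∧ Integrable (fun z => Real.log ((π.rnDeriv lam z).toReal)) π then
    ENNReal.ofReal (∫ z, Real.log ((π.rnDeriv lam z).toReal) ∂π)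
  else ∞

/-- The rate-distortion function `R_X(D)`: the infimum of `D_KL(π ‖ π₁ ⊗ π₂)` over all
probability measures `π` on `X × Y` whose first marginal is `μ_X` and which satisfy
`∫ ρ dπ ≤ D` (with `inf ∅ = ∞`). -/
noncomputable def rdFun {A B : Type*} [MeasurableSpace A] [MeasurableSpace B]
    (μX : Measure A) (ρ : A → B → ℝ≥0∞) (D : ℝ) : ℝ≥0∞ :=
  sInf {e : ℝ≥0∞ | ∃ π : Measure (A × B), IsProbabilityMeasure π ∧ π.fst = μX ∧
    (∫⁻ p, ρ p.1 p.2 ∂π) ≤ ENNReal.ofReal D ∧ e = klDivNN π (π.fst.prod π.snd)}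


/-- Gibbs' inequality / nonnegativity of KL divergence against a subprobability measure. -/
lemma aux_integral_log_rnDeriv_nonneg {Z : Type*} [MeasurableSpace Z] (π κ : Measure Z)
    [IsProbabilityMeasure π] [IsFiniteMeasure κ] (hκ1 : κ Set.univ ≤ 1) (hπκ : π ≪ κ)
    (hint : Integrable (fun z => Real.log ((π.rnDeriv κ z).toReal)) π) :
    0 ≤ ∫ z, Real.log ((π.rnDeriv κ z).toReal) ∂π := by
  set w := π.rnDeriv κ with hw
  have hwm : Measurable w := Measure.measurable_rnDeriv π κ
  have hpos : ∀ᵐ z ∂π, 0 < w z := Measure.rnDeriv_pos hπκ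
  have hlt : ∀ᵐ z ∂π, w z < ∞ := hπκ.ae_le (Measure.rnDeriv_lt_top π κ)
  have hlint : ∫⁻ z, (w z)⁻¹ ∂π ≤ 1 := by
    conv_lhs => rw [← Measure.withDensity_rnDeriv_eq π κ hπκ]
    rw [lintegral_withDensity_eq_lintegral_mul κ (f := π.rnDeriv κ) hwm (g := fun z => (w z)⁻¹) hwm.inv]
    calc ∫⁻ z, (w * fun z => (w z)⁻¹) z ∂κ ≤ ∫⁻ _, 1 ∂κ := by
          refine lintegral_mono fun z => ?_
          simpa using ENNReal.mul_inv_le_one (w z)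
      _ = κ Set.univ := by simp
      _ ≤ 1 := hκ1
  have hinv_int : Integrable (fun z => ((w z)⁻¹).toReal) π :=
    integrable_toReal_of_lintegral_ne_top hwm.inv.aemeasurable
      (ne_top_of_le_ne_top ENNReal.one_ne_top hlint)
  have hinv_val : ∫ z, ((w z)⁻¹).toReal ∂π ≤ 1 := by
    rw [integral_toReal (f := fun z => (w z)⁻¹) hwm.inv.aemeasurable
      (hpos.mono fun z hz => by simpa [ENNReal.inv_lt_top] using hz)]
    exact ENNReal.toReal_le_of_le_ofReal one_pos.le (by simpa using hlint)
  have key : ∀ᵐ z ∂π, 1 - ((w z)⁻¹).toReal ≤ Real.log ((w z).toReal) := by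
    filter_upwards [hpos, hlt] with z h0 htop
    have hwr : 0 < (w z).toReal := ENNReal.toReal_pos h0.ne' htop.ne
    have hinv : ((w z)⁻¹).toReal = ((w z).toReal)⁻¹ := ENNReal.toReal_inv _
    rw [hinv]
    have hle := Real.log_le_sub_one_of_pos (inv_pos.mpr hwr)
    rw [Real.log_inv] at hle
    linarith
  have hf1 : Integrable (fun z => 1 - ((w z)⁻¹).toReal) π :=
    (integrable_const (1:ℝ)).sub hinv_int
  have hmono := integral_mono_ae hf1 hint key
  rw [integral_sub (integrable_const _) hinv_int, integral_const] at hmono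
  simp only [measure_univ, ENNReal.toReal_one, probReal_univ, smul_eq_mul, one_mul] at hmono
  linarith

/-- Summation bound for the discretized exponential integral. -/
lemma aux_tsum_exp (m' : ℝ) (hm' : 0 < m') : ∃ K : ℝ, 0 < K ∧
    ∀ c' r s : ℝ, 0 < c' → 0 < r → s * r = 2 →
      (∑' n : ℕ, ENNReal.ofReal (Real.exp (-(s * ((n : ℝ) * r)))) *
          ENNReal.ofReal (c' * (((n : ℝ) + 1) * r) ^ m'))
        ≤ ENNReal.ofReal (c' * r ^ m' * K) := by
  classical
  set M : ℕ := Nat.ceil m' with hM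
  set K0 : ℝ := (M.factorial : ℝ) * Real.exp 1 with hK0
  have hK00 : 0 < K0 := by positivity
  have hq : Real.exp (-1) < 1 := by
    rw [show (1:ℝ) = Real.exp 0 by simp]
    exact Real.exp_lt_exp.mpr (by norm_num)
  have hq0 : 0 ≤ Real.exp (-1) := (Real.exp_pos _).le
  have h1q : (0:ℝ) < 1 - Real.exp (-1) := by linarith
  refine ⟨K0 * (1 - Real.exp (-1))⁻¹, by positivity, fun c' r s hc' hr hsr => ?_⟩
  have hterm : ∀ n : ℕ,
      ENNReal.ofReal (Real.exp (-(s * ((n : ℝ) * r)))) *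
        ENNReal.ofReal (c' * (((n : ℝ) + 1) * r) ^ m')
      ≤ ENNReal.ofReal (c' * r ^ m' * K0) * ENNReal.ofReal (Real.exp (-1)) ^ n := by
    intro n
    rw [← ENNReal.ofReal_mul (Real.exp_nonneg _), ← ENNReal.ofReal_pow hq0,
      ← ENNReal.ofReal_mul (by positivity)]
    apply ENNReal.ofReal_le_ofReal
    have h1 : s * ((n : ℝ) * r) = 2 * n := by
      rw [show s * ((n : ℝ) * r) = (s * r) * n by ring, hsr]
    have h2 : (((n : ℝ) + 1) * r) ^ m' = ((n : ℝ) + 1) ^ m' * r ^ m' :=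
      Real.mul_rpow (by positivity) hr.le
    have h3 : ((n : ℝ) + 1) ^ m' ≤ ((n : ℝ) + 1) ^ (M : ℝ) :=
      Real.rpow_le_rpow_of_exponent_le (by simp) (Nat.le_ceil m')
    have h4 : ((n : ℝ) + 1) ^ (M : ℝ) = ((n : ℝ) + 1) ^ M := Real.rpow_natCast _ M
    have h5 : ((n : ℝ) + 1) ^ M ≤ (M.factorial : ℝ) * Real.exp ((n : ℝ) + 1) := by
      have := Real.pow_div_factorial_le_exp (x := (n : ℝ) + 1) (by positivity) M
      rw [div_le_iff₀ (by positivity)] at this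
      linarith [this]
    have h6 : Real.exp (-(2 * (n : ℝ))) * Real.exp ((n : ℝ) + 1)
        = Real.exp 1 * Real.exp (-1) ^ n := by
      rw [← Real.exp_nat_mul, ← Real.exp_add, ← Real.exp_add]
      ring_nf
    calc Real.exp (-(s * ((n : ℝ) * r))) * (c' * (((n : ℝ) + 1) * r) ^ m')
        = Real.exp (-(2 * (n : ℝ))) * (c' * (((n : ℝ) + 1) ^ m' * r ^ m')) := by
          rw [h1, h2]
      _ ≤ Real.exp (-(2 * (n : ℝ))) * (c' * ((M.factorial : ℝ) * Real.exp ((n : ℝ) + 1) * r ^ m')) := by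
          have := (h3.trans (le_of_eq h4)).trans h5
          gcongr
      _ = c' * r ^ m' * K0 * Real.exp (-1) ^ n := by
          rw [hK0]
          linear_combination (c' * r ^ m' * (M.factorial : ℝ)) * h6
  calc (∑' n : ℕ, ENNReal.ofReal (Real.exp (-(s * ((n : ℝ) * r)))) *
          ENNReal.ofReal (c' * (((n : ℝ) + 1) * r) ^ m'))
      ≤ ∑' n : ℕ, ENNReal.ofReal (c' * r ^ m' * K0) * ENNReal.ofReal (Real.exp (-1)) ^ n :=
        ENNReal.tsum_le_tsum hterm
    _ = ENNReal.ofReal (c' * r ^ m' * K0) * (1 - ENNReal.ofReal (Real.exp (-1)))⁻¹ := by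
        rw [ENNReal.tsum_mul_left, ENNReal.tsum_geometric]
    _ = ENNReal.ofReal (c' * r ^ m' * (K0 * (1 - Real.exp (-1))⁻¹)) := by
        rw [show (1 : ℝ≥0∞) - ENNReal.ofReal (Real.exp (-1))
            = ENNReal.ofReal (1 - Real.exp (-1)) by
            rw [ENNReal.ofReal_sub _ hq0, ENNReal.ofReal_one],
          ← ENNReal.ofReal_inv_of_pos h1q, ← ENNReal.ofReal_mul (by positivity)]
        ring_nf

/-- Layer-cake bound: the exponential integral against a subregular measure. -/
lemma aux_lintegral_exp_le {A B : Type*} [MeasurableSpace A] [MeasurableSpace B]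
    (μ : Measure A) (ρ : A → B → ℝ≥0∞) (hρ : Measurable (Function.uncurry ρ))
    (m' c' K : ℝ) (hc' : 0 < c')
    (hsub' : ∀ (y : B) (τ : ℝ), 0 < τ →
      μ {x | ρ x y < ENNReal.ofReal τ} ≤ ENNReal.ofReal (c' * τ ^ m'))
    (htsum : ∀ r s : ℝ, 0 < r → s * r = 2 →
      (∑' n : ℕ, ENNReal.ofReal (Real.exp (-(s * ((n : ℝ) * r)))) *
          ENNReal.ofReal (c' * (((n : ℝ) + 1) * r) ^ m'))
        ≤ ENNReal.ofReal (c' * r ^ m' * K))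
    (s r : ℝ) (hs : 0 < s) (hr : 0 < r) (hsr : s * r = 2) (y : B) :
    ∫⁻ x, (if ρ x y = ∞ then 0
        else ENNReal.ofReal (Real.exp (-(s * (ρ x y).toReal)))) ∂μ
      ≤ ENNReal.ofReal (c' * r ^ m' * K) := by
  classical
  have hmy : Measurable (fun x => ρ x y) :=
    hρ.comp (measurable_prodMk_right (y := y))
  set S : ℕ → Set A := fun n => {x | ρ x y < ENNReal.ofReal (((n : ℝ) + 1) * r)} with hS
  have hSm : ∀ n, MeasurableSet (S n) := fun n => measurableSet_lt hmy measurable_const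
  have hpt : ∀ x, (if ρ x y = ∞ then 0
      else ENNReal.ofReal (Real.exp (-(s * (ρ x y).toReal))))
      ≤ ∑' n : ℕ, (S n).indicator
          (fun _ => ENNReal.ofReal (Real.exp (-(s * ((n : ℝ) * r))))) x := by
    intro x
    by_cases hx : ρ x y = ∞
    · simp [hx]
    · rw [if_neg hx]
      set u : ℝ := (ρ x y).toReal with hu
      have hu0 : 0 ≤ u := ENNReal.toReal_nonneg
      set N : ℕ := ⌊u / r⌋₊ with hN
      have hN1 : (N : ℝ) * r ≤ u := by
        have h := Nat.floor_le (a := u / r) (by positivity)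
        calc (N : ℝ) * r ≤ (u / r) * r := by
              exact mul_le_mul_of_nonneg_right h hr.le
          _ = u := by field_simp
      have hN2 : u < ((N : ℝ) + 1) * r := by
        have h := Nat.lt_floor_add_one (u / r)
        calc u = (u / r) * r := by field_simp
          _ < ((N : ℝ) + 1) * r := by
            exact mul_lt_mul_of_pos_right h hr
      have hmem : x ∈ S N := by
        simp only [hS, Set.mem_setOf_eq]
        rw [show ρ x y = ENNReal.ofReal u from (ENNReal.ofReal_toReal hx).symm]
        exact (ENNReal.ofReal_lt_ofReal_iff (by positivity)).mpr hN2
      calc ENNReal.ofReal (Real.exp (-(s * u)))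
          ≤ ENNReal.ofReal (Real.exp (-(s * ((N : ℝ) * r)))) := by
            apply ENNReal.ofReal_le_ofReal
            apply Real.exp_le_exp.mpr
            have := mul_le_mul_of_nonneg_left hN1 hs.le
            linarith
        _ = (S N).indicator
            (fun _ => ENNReal.ofReal (Real.exp (-(s * ((N : ℝ) * r))))) x := by
            rw [Set.indicator_of_mem hmem]
        _ ≤ ∑' n : ℕ, (S n).indicator
            (fun _ => ENNReal.ofReal (Real.exp (-(s * ((n : ℝ) * r))))) x :=
          ENNReal.le_tsum N
  calc ∫⁻ x, (if ρ x y = ∞ then 0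
        else ENNReal.ofReal (Real.exp (-(s * (ρ x y).toReal)))) ∂μ
      ≤ ∫⁻ x, ∑' n : ℕ, (S n).indicator
          (fun _ => ENNReal.ofReal (Real.exp (-(s * ((n : ℝ) * r))))) x ∂μ :=
        lintegral_mono hpt
    _ = ∑' n : ℕ, ∫⁻ x, (S n).indicator
          (fun _ => ENNReal.ofReal (Real.exp (-(s * ((n : ℝ) * r))))) x ∂μ :=
        lintegral_tsum fun n => (measurable_const.indicator (hSm n)).aemeasurable
    _ = ∑' n : ℕ, ENNReal.ofReal (Real.exp (-(s * ((n : ℝ) * r)))) * μ (S n) := by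
        refine tsum_congr fun n => ?_
        rw [lintegral_indicator_const (hSm n)]
    _ ≤ ∑' n : ℕ, ENNReal.ofReal (Real.exp (-(s * ((n : ℝ) * r)))) *
          ENNReal.ofReal (c' * (((n : ℝ) + 1) * r) ^ m') := by
        refine ENNReal.tsum_le_tsum fun n => ?_
        exact mul_le_mul_right (hsub' y _ (by positivity)) _
    _ ≤ ENNReal.ofReal (c' * r ^ m' * K) := htsum r s hr hsr

/-- Core lower bound for the KL divergence of an admissible coupling. -/
lemma kl_core {A B : Type*} [MeasurableSpace A] [MeasurableSpace B]
    (μ : Measure A) [SigmaFinite μ] (μX : Measure A) [IsProbabilityMeasure μX]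
    (hac : μX ≪ μ)
    (hent : Integrable (fun x => Real.log ((μX.rnDeriv μ x).toReal)) μX)
    (ρ : A → B → ℝ≥0∞) (hρ : Measurable (Function.uncurry ρ))
    (m' c' K : ℝ) (hc' : 0 < c') (hK : 0 < K)
    (hsub' : ∀ (y : B) (τ : ℝ), 0 < τ →
      μ {x | ρ x y < ENNReal.ofReal τ} ≤ ENNReal.ofReal (c' * τ ^ m'))
    (htsum : ∀ r s : ℝ, 0 < r → s * r = 2 →
      (∑' n : ℕ, ENNReal.ofReal (Real.exp (-(s * ((n : ℝ) * r)))) *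
          ENNReal.ofReal (c' * (((n : ℝ) + 1) * r) ^ m'))
        ≤ ENNReal.ofReal (c' * r ^ m' * K))
    (s Dk : ℝ) (hs : 0 < s) (hDk : 0 < Dk)
    (π : Measure (A × B)) [IsProbabilityMeasure π] (hπ1 : π.fst = μX)
    (hπD : ∫⁻ p, ρ p.1 p.2 ∂π ≤ ENNReal.ofReal Dk) :
    ENNReal.ofReal ((-∫ x, Real.log ((μX.rnDeriv μ x).toReal) ∂μX) - s * Dk
        - Real.log (c' * (2 / s) ^ m' * K)) ≤ klDivNN π (π.fst.prod π.snd) := by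
  classical
  rw [klDivNN]
  split_ifs with hcond
  swap
  · exact le_top
  obtain ⟨hπlam, hint⟩ := hcond
  set lam := π.fst.prod π.snd with hlam
  haveI : IsProbabilityMeasure lam := by
    rw [hlam]; infer_instance
  set f := μX.rnDeriv μ with hfdef
  have hfm : Measurable f := Measure.measurable_rnDeriv _ _
  set r : ℝ := 2 / s with hrdef
  have hr0 : 0 < r := by positivity
  have hsr : s * r = 2 := by
    rw [hrdef]; field_simp
  set E : A × B → ℝ≥0∞ := fun p => if ρ p.1 p.2 = ∞ then 0
      else ENNReal.ofReal (Real.exp (-(s * (ρ p.1 p.2).toReal))) with hEdef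
  have hEm : Measurable E := by
    refine Measurable.ite (hρ (measurableSet_singleton ∞)) measurable_const ?_
    exact (ENNReal.measurable_ofReal.comp
      (Real.measurable_exp.comp ((hρ.ennreal_toReal.const_mul s).neg)))
  set Zr : ℝ := c' * r ^ m' * K with hZrdef
  have hZr : (0:ℝ) < Zr := by positivity
  set Z : ℝ≥0∞ := ENNReal.ofReal Zr with hZdef
  have hZ0 : Z ≠ 0 := (ENNReal.ofReal_pos.mpr hZr).ne'
  have hZtop : Z ≠ ∞ := ENNReal.ofReal_ne_top
  set h : A × B → ℝ≥0∞ := fun p => Z⁻¹ * ((f p.1)⁻¹ * E p) with hhdef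
  have hhm : Measurable h :=
    measurable_const.mul (((hfm.comp measurable_fst).inv).mul hEm)
  -- the inner integral is at most 1
  have hEbound : ∀ y : B, ∫⁻ x, E (x, y) ∂μ ≤ Z :=
    fun y => aux_lintegral_exp_le μ ρ hρ m' c' K hc' hsub' htsum s r hs hr0 hsr y
  have hinner : ∀ y : B, ∫⁻ x, h (x, y) ∂μX ≤ 1 := by
    intro y
    have hmeas : Measurable fun x => (f x)⁻¹ * E (x, y) :=
      (hfm.inv).mul (hEm.comp (measurable_prodMk_right (y := y)))
    have h1 : ∫⁻ x, (f x)⁻¹ * E (x, y) ∂μX ≤ Z := by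
      conv_lhs => rw [← Measure.withDensity_rnDeriv_eq μX μ hac]
      rw [lintegral_withDensity_eq_lintegral_mul μ hfm hmeas]
      calc ∫⁻ x, (f * fun x => (f x)⁻¹ * E (x, y)) x ∂μ
          ≤ ∫⁻ x, E (x, y) ∂μ := by
            refine lintegral_mono fun x => ?_
            simp only [Pi.mul_apply, ← mul_assoc]
            calc f x * (f x)⁻¹ * E (x, y) ≤ 1 * E (x, y) :=
              mul_le_mul_left (ENNReal.mul_inv_le_one _) _
            _ = E (x, y) := one_mul _
        _ ≤ Z := hEbound y
    calc ∫⁻ x, h (x, y) ∂μX = Z⁻¹ * ∫⁻ x, (f x)⁻¹ * E (x, y) ∂μX :=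
          lintegral_const_mul _ hmeas
      _ ≤ Z⁻¹ * Z := mul_le_mul_right h1 _
      _ ≤ 1 := ENNReal.inv_mul_le_one _
  set κ := lam.withDensity h with hκdef
  have hκuniv : κ Set.univ ≤ 1 := by
    rw [hκdef, withDensity_apply _ MeasurableSet.univ, Measure.restrict_univ, hlam, hπ1,
      lintegral_prod_symm _ hhm.aemeasurable]
    calc ∫⁻ y, ∫⁻ x, h (x, y) ∂μX ∂π.snd ≤ ∫⁻ _, 1 ∂π.snd :=
          lintegral_mono fun y => hinner y
      _ = 1 := by simp
  haveI : IsFiniteMeasure κ := ⟨lt_of_le_of_lt hκuniv ENNReal.one_lt_top⟩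
  -- a.e. facts
  have hae_fst : ∀ {P : A → Prop}, MeasurableSet {x | P x} → (∀ᵐ x ∂μX, P x) →
      (∀ᵐ p : A × B ∂π, P p.1) := by
    intro P hP hμ
    rw [ae_iff] at hμ ⊢
    have hset : {p : A × B | ¬ P p.1} = Prod.fst ⁻¹' {x | ¬ P x} := rfl
    have hPc : MeasurableSet {x | ¬ P x} := hP.compl
    rw [hset, ← Measure.fst_apply hPc, hπ1]
    exact hμ
  have hf_pos : ∀ᵐ p : A × B ∂π, 0 < f p.1 :=
    hae_fst (measurableSet_lt measurable_const hfm) (Measure.rnDeriv_pos hac)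
  have hf_lt_top : ∀ᵐ p : A × B ∂π, f p.1 < ∞ :=
    hae_fst (measurableSet_lt hfm measurable_const)
      (hac.ae_le (Measure.rnDeriv_lt_top μX μ))
  have hρtop : ∀ᵐ p : A × B ∂π, ρ p.1 p.2 < ∞ :=
    ae_lt_top hρ (lt_of_le_of_lt hπD ENNReal.ofReal_lt_top).ne
  have hh_pos : ∀ᵐ p : A × B ∂π, 0 < h p ∧ h p < ∞ := by
    filter_upwards [hf_pos, hf_lt_top, hρtop] with p h1 h2 h3
    have hE1 : E p = ENNReal.ofReal (Real.exp (-(s * (ρ p.1 p.2).toReal))) := if_neg h3.ne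
    constructor
    · rw [hhdef]
      apply ENNReal.mul_pos (by simpa [ENNReal.inv_ne_zero] using hZtop)
      apply ENNReal.mul_pos (by simpa [ENNReal.inv_ne_zero] using h2.ne) ?_ |>.ne'
      rw [hE1]
      exact (ENNReal.ofReal_pos.mpr (Real.exp_pos _)).ne'
    · rw [hhdef]
      refine ENNReal.mul_lt_top ?_ (ENNReal.mul_lt_top ?_ ?_)
      · exact ENNReal.inv_lt_top.mpr (ENNReal.ofReal_pos.mpr hZr)
      · exact ENNReal.inv_lt_top.mpr h1
      · rw [hE1]; exact ENNReal.ofReal_lt_top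
  have hπκ : π ≪ κ := by
    refine Measure.AbsolutelyContinuous.mk fun S hS h0 => ?_
    rw [hκdef, withDensity_apply _ hS] at h0
    have h1 : ∀ᵐ p ∂lam, p ∈ S → h p = 0 := by
      rw [← ae_restrict_iff' hS]
      exact (lintegral_eq_zero_iff hhm).mp h0
    have h2 : lam (S ∩ {p | h p ≠ 0}) = 0 := by
      rw [ae_iff] at h1
      refine measure_mono_null (fun p hp => ?_) h1
      simp only [Set.mem_setOf_eq]
      intro hcontra
      exact hp.2 (hcontra hp.1)
    have h3 : π (S ∩ {p | h p ≠ 0}) = 0 := hπlam h2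
    have h4 : π {p | h p = 0} = 0 := by
      rw [ae_iff] at hh_pos
      refine measure_mono_null (fun p hp => ?_) hh_pos
      simp only [Set.mem_setOf_eq] at hp ⊢
      intro hcontra
      exact absurd hp hcontra.1.ne'
    refine le_antisymm ?_ (zero_le)
    calc π S ≤ π ((S ∩ {p | h p ≠ 0}) ∪ {p | h p = 0}) := by
          refine measure_mono fun p hp => ?_
          by_cases hzero : h p = 0
          · exact Or.inr hzero
          · exact Or.inl ⟨hp, hzero⟩
      _ ≤ π (S ∩ {p | h p ≠ 0}) + π {p | h p = 0} := measure_union_le _ _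
      _ ≤ 0 := by rw [h3, h4, add_zero]
  -- chain rule
  have hrd1 : π.rnDeriv κ * κ.rnDeriv lam =ᵐ[lam] π.rnDeriv lam :=
    Measure.rnDeriv_mul_rnDeriv hπκ
  have hrd2 : κ.rnDeriv lam =ᵐ[lam] h := Measure.rnDeriv_withDensity lam hhm
  have hπrd : ∀ᵐ p ∂π, π.rnDeriv lam p = π.rnDeriv κ p * h p := by
    filter_upwards [hπlam.ae_le hrd1, hπlam.ae_le hrd2] with p h1 h2
    rw [← h1, Pi.mul_apply, h2]
  have hv1 : ∀ᵐ p ∂π, 0 < π.rnDeriv κ p := Measure.rnDeriv_pos hπκ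
  have hv2 : ∀ᵐ p ∂π, π.rnDeriv κ p < ∞ := hπκ.ae_le (Measure.rnDeriv_lt_top π κ)
  -- logarithmic identity
  have hlog : (fun p => Real.log ((π.rnDeriv lam p).toReal)) =ᵐ[π]
      fun p => Real.log ((π.rnDeriv κ p).toReal) +
        (-Real.log ((f p.1).toReal) - s * (ρ p.1 p.2).toReal - Real.log Zr) := by
    filter_upwards [hπrd, hv1, hv2, hf_pos, hf_lt_top, hρtop] with p h1 h2 h3 h4 h5 h6
    have hE1 : E p = ENNReal.ofReal (Real.exp (-(s * (ρ p.1 p.2).toReal))) := if_neg h6.ne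
    have ha : 0 < (π.rnDeriv κ p).toReal := ENNReal.toReal_pos h2.ne' h3.ne
    have hb : 0 < Zr⁻¹ := inv_pos.mpr hZr
    have hfr : 0 < ((f p.1).toReal)⁻¹ :=
      inv_pos.mpr (ENNReal.toReal_pos h4.ne' h5.ne)
    have hex : 0 < Real.exp (-(s * (ρ p.1 p.2).toReal)) := Real.exp_pos _
    rw [h1, ENNReal.toReal_mul, hhdef]
    simp only []
    rw [ENNReal.toReal_mul, ENNReal.toReal_mul, ENNReal.toReal_inv, ENNReal.toReal_inv,
      hE1, ENNReal.toReal_ofReal (Real.exp_nonneg _), hZdef,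
      ENNReal.toReal_ofReal hZr.le]
    rw [Real.log_mul ha.ne' (by positivity),
      Real.log_mul hb.ne' (by positivity),
      Real.log_mul hfr.ne' hex.ne',
      Real.log_inv, Real.log_inv, Real.log_exp]
    ring
  -- integrability
  have hItoReal : Integrable (fun p : A × B => (ρ p.1 p.2).toReal) π :=
    integrable_toReal_of_lintegral_ne_top hρ.aemeasurable
      (lt_of_le_of_lt hπD ENNReal.ofReal_lt_top).ne
  have hmapfst : π.map Prod.fst = μX := by rw [← hπ1]; rfl
  have hgsm : AEStronglyMeasurable (fun x => Real.log ((f x).toReal)) (π.map Prod.fst) :=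
    (Real.measurable_log.comp hfm.ennreal_toReal).aestronglyMeasurable
  have hIlogf : Integrable (fun p : A × B => Real.log ((f p.1).toReal)) π := by
    have := (integrable_map_measure hgsm measurable_fst.aemeasurable).mp
      (by rwa [hmapfst])
    exact this
  have hIG : Integrable (fun p : A × B =>
      -Real.log ((f p.1).toReal) - s * (ρ p.1 p.2).toReal - Real.log Zr) π :=
    ((hIlogf.neg).sub (hItoReal.const_mul s)).sub (integrable_const _)
  have hIκ : Integrable (fun p => Real.log ((π.rnDeriv κ p).toReal)) π := by
    refine (hint.sub hIG).congr ?_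
    filter_upwards [hlog] with p hp
    simp only [Pi.sub_apply]
    rw [hp]; ring
  -- integral computation
  have hint_eq : ∫ p, Real.log ((π.rnDeriv lam p).toReal) ∂π
      = (∫ p, Real.log ((π.rnDeriv κ p).toReal) ∂π)
        + ((-∫ p, Real.log ((f p.1).toReal) ∂π) - s * (∫ p, (ρ p.1 p.2).toReal ∂π)
          - Real.log Zr) := by
    have hIneg : Integrable (fun p : A × B => -Real.log ((f p.1).toReal)) π := hIlogf.neg
    have hIsρ : Integrable (fun p : A × B => s * (ρ p.1 p.2).toReal) π :=
      hItoReal.const_mul s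
    have hI1 : Integrable (fun p : A × B =>
        -Real.log ((f p.1).toReal) - s * (ρ p.1 p.2).toReal) π := hIneg.sub hIsρ
    rw [integral_congr_ae hlog, integral_add hIκ hIG,
      integral_sub hI1 (integrable_const _),
      integral_sub hIneg hIsρ, integral_neg, integral_const_mul,
      integral_const]
    simp [measure_univ]
  have hfeq : ∫ p, Real.log ((f p.1).toReal) ∂π = ∫ x, Real.log ((f x).toReal) ∂μX := by
    rw [← hmapfst, integral_map measurable_fst.aemeasurable hgsm]
  have hρval : ∫ p, (ρ p.1 p.2).toReal ∂π ≤ Dk := by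
    have hunc : AEMeasurable (fun p : A × B => ρ p.1 p.2) π := hρ.aemeasurable
    rw [integral_toReal hunc hρtop]
    exact ENNReal.toReal_le_of_le_ofReal hDk.le hπD
  have hnonneg : 0 ≤ ∫ p, Real.log ((π.rnDeriv κ p).toReal) ∂π :=
    aux_integral_log_rnDeriv_nonneg π κ hκuniv hπκ hIκ
  apply ENNReal.ofReal_le_ofReal
  rw [hint_eq, hfeq]
  have hsD : s * (∫ p, (ρ p.1 p.2).toReal ∂π) ≤ s * Dk :=
    mul_le_mul_of_nonneg_left hρval hs.le
  have hZreq : Real.log (c' * (2 / s) ^ m' * K) = Real.log Zr := by rw [hZrdef, hrdef]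
  linarith

/-- If `μ` is σ-finite, `μ_X ≪ μ` with finite generalized entropy, `μ`
is `ρ^{1/k}`-subregular of dimension `m` with constants `c ∈ (0,∞)` and `δ₀ ∈ (0,∞]`,
and `μ(X) = 1` whenever `δ₀ < ∞`, then the lower rate-distortion dimension of order `k`
satisfies `liminf_{D→0⁺} R_X(D^k)/log(1/D) ≥ m`. -/
theorem lower_rd_dimension_ge
    {A B : Type*} [MeasurableSpace A] [MeasurableSpace B]
    (μ : Measure A) [SigmaFinite μ] (μX : Measure A) [IsProbabilityMeasure μX]
    (hac : μX ≪ μ)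
    (hent : Integrable (fun x => Real.log ((μX.rnDeriv μ x).toReal)) μX)
    (ρ : A → B → ℝ≥0∞) (hρ : Measurable (Function.uncurry ρ))
    (k m c : ℝ) (δ₀ : ℝ≥0∞) (hk : 0 < k) (hm : 0 < m) (hc : 0 < c) (hδ₀ : 0 < δ₀)
    (hsub : ∀ y : B, ∀ t : ℝ, 0 < t → ENNReal.ofReal t < δ₀ →
      μ {x | (ρ x y) ^ (1 / k) < ENNReal.ofReal t} ≤ ENNReal.ofReal (c * t ^ m))
    (hμ1 : δ₀ < ∞ → IsProbabilityMeasure μ) :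
    ENNReal.ofReal m ≤
      Filter.liminf
        (fun D : ℝ => rdFun μX ρ (D ^ k) / ENNReal.ofReal (Real.log (1 / D)))
        (𝓝[>] (0 : ℝ)) := by
  classical
  -- a scale below δ₀
  obtain ⟨d, hd0, hdδ⟩ : ∃ d : ℝ, 0 < d ∧ ENNReal.ofReal d < δ₀ := by
    rcases eq_or_ne δ₀ ∞ with hδtop | hδtop
    · exact ⟨1, one_pos, by simp [hδtop]⟩
    · refine ⟨δ₀.toReal / 2, ?_, ?_⟩
      · have : 0 < δ₀.toReal := ENNReal.toReal_pos hδ₀.ne' hδtop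
        linarith
      · rw [ENNReal.ofReal_lt_iff_lt_toReal (by positivity) hδtop]
        have : 0 < δ₀.toReal := ENNReal.toReal_pos hδ₀.ne' hδtop
        linarith
  set m' : ℝ := m / k with hm'def
  have hm' : 0 < m' := by positivity
  set τ₀ : ℝ := d ^ k with hτ₀def
  have hτ₀ : 0 < τ₀ := Real.rpow_pos_of_pos hd0 k
  set c' : ℝ := max c (τ₀ ^ (-m')) with hc'def
  have hc' : 0 < c' := lt_of_lt_of_le hc (le_max_left _ _)
  -- unified subregularity at all scales for ρ itself
  have hsub' : ∀ (y : B) (τ : ℝ), 0 < τ →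
      μ {x | ρ x y < ENNReal.ofReal τ} ≤ ENNReal.ofReal (c' * τ ^ m') := by
    intro y τ hτ
    have hkey : ENNReal.ofReal (τ ^ (1/k)) < δ₀ →
        μ {x | ρ x y < ENNReal.ofReal τ} ≤ ENNReal.ofReal (c' * τ ^ m') := by
      intro hlt
      have ht0 : 0 < τ ^ (1/k) := Real.rpow_pos_of_pos hτ _
      have hset : {x | ρ x y < ENNReal.ofReal τ}
          = {x | (ρ x y) ^ (1/k) < ENNReal.ofReal (τ ^ (1/k))} := by
        ext x
        simp only [Set.mem_setOf_eq]
        rw [← ENNReal.ofReal_rpow_of_pos hτ]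
        exact (ENNReal.rpow_lt_rpow_iff (by positivity : (0:ℝ) < 1/k)).symm
      rw [hset]
      refine (hsub y _ ht0 hlt).trans (ENNReal.ofReal_le_ofReal ?_)
      rw [← Real.rpow_mul hτ.le, show (1/k) * m = m' by rw [hm'def]; ring]
      exact mul_le_mul_of_nonneg_right (le_max_left _ _) (Real.rpow_nonneg hτ.le _)
    by_cases hcase : τ < τ₀
    · apply hkey
      have htd : τ ^ (1/k) < d := by
        have h1 : τ ^ (1/k) < τ₀ ^ (1/k) := Real.rpow_lt_rpow hτ.le hcase (by positivity)
        rwa [hτ₀def, ← Real.rpow_mul hd0.le, mul_one_div, div_self hk.ne',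
          Real.rpow_one] at h1
      exact lt_trans ((ENNReal.ofReal_lt_ofReal_iff hd0).mpr htd) hdδ
    · rcases eq_or_ne δ₀ ∞ with hδtop | hδtop
      · exact hkey (by rw [hδtop]; exact ENNReal.ofReal_lt_top)
      · haveI hprob : IsProbabilityMeasure μ := hμ1 (lt_top_iff_ne_top.mpr hδtop)
        calc μ {x | ρ x y < ENNReal.ofReal τ} ≤ 1 := prob_le_one
          _ ≤ ENNReal.ofReal (c' * τ ^ m') := by
              rw [ENNReal.one_le_ofReal]
              have hττ₀ : τ₀ ≤ τ := not_lt.mp hcase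
              calc (1:ℝ) ≤ (τ/τ₀) ^ m' :=
                    Real.one_le_rpow (by rw [le_div_iff₀ hτ₀]; linarith) hm'.le
                _ = τ₀ ^ (-m') * τ ^ m' := by
                    rw [Real.div_rpow hτ.le hτ₀.le, Real.rpow_neg hτ₀.le]
                    ring
                _ ≤ c' * τ ^ m' := mul_le_mul_of_nonneg_right (le_max_right _ _)
                    (Real.rpow_nonneg hτ.le _)
  obtain ⟨K, hK, htsum⟩ := aux_tsum_exp m' hm'
  set H : ℝ := -∫ x, Real.log ((μX.rnDeriv μ x).toReal) ∂μX with hH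
  set C₀ : ℝ := H - 1 - Real.log (c' * 2 ^ m' * K) with hC₀
  have hbound : ∀ᶠ D in 𝓝[>](0:ℝ),
      ENNReal.ofReal (m + C₀ / Real.log (1 / D))
        ≤ rdFun μX ρ (D ^ k) / ENNReal.ofReal (Real.log (1 / D)) := by
    filter_upwards [Ioo_mem_nhdsGT_of_mem
      (by constructor <;> norm_num : (0:ℝ) ∈ Set.Ico 0 1)] with D hD
    obtain ⟨hD0, hD1⟩ := hD
    have hDk : 0 < D ^ k := Real.rpow_pos_of_pos hD0 k
    have hL : 0 < Real.log (1 / D) := by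
      rw [one_div, Real.log_inv]
      linarith [Real.log_neg hD0 hD1]
    have hrd : ENNReal.ofReal (C₀ + m * Real.log (1 / D)) ≤ rdFun μX ρ (D ^ k) := by
      rw [rdFun]
      refine le_sInf fun e he => ?_
      obtain ⟨π, hπprob, hπ1, hπD, rfl⟩ := he
      haveI := hπprob
      have hcore := kl_core μ μX hac hent ρ hρ m' c' K hc' hK hsub'
        (fun r s hr hsr => htsum c' r s hc' hr hsr) ((D ^ k)⁻¹) (D ^ k)
        (by positivity) hDk π hπ1 hπD
      have heq : H - (D ^ k)⁻¹ * D ^ k - Real.log (c' * (2 / (D ^ k)⁻¹) ^ m' * K)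
          = C₀ + m * Real.log (1 / D) := by
        have h1 : (D ^ k)⁻¹ * D ^ k = 1 := inv_mul_cancel₀ hDk.ne'
        have h2 : (2 / (D ^ k)⁻¹ : ℝ) = 2 * D ^ k := by field_simp
        have h3 : ((2 : ℝ) * D ^ k) ^ m' = 2 ^ m' * D ^ m := by
          rw [Real.mul_rpow (by norm_num) hDk.le, ← Real.rpow_mul hD0.le,
            show k * m' = m by rw [hm'def]; field_simp]
        have h4 : Real.log (c' * (2 ^ m' * D ^ m) * K)
            = Real.log (c' * 2 ^ m' * K) + m * Real.log D := by
          rw [show c' * (2 ^ m' * D ^ m) * K = (c' * 2 ^ m' * K) * D ^ m by ring,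
            Real.log_mul (by positivity) (by positivity : (0:ℝ) < D ^ m).ne',
            Real.log_rpow hD0]
        rw [h1, h2, h3, h4, hC₀, one_div, Real.log_inv]
        ring
      rw [← heq]
      exact hcore
    calc ENNReal.ofReal (m + C₀ / Real.log (1 / D))
        = ENNReal.ofReal ((C₀ + m * Real.log (1 / D)) / Real.log (1 / D)) := by
          congr 1
          rw [add_div, mul_div_cancel_right₀ _ hL.ne']
          exact add_comm _ _
      _ = ENNReal.ofReal (C₀ + m * Real.log (1 / D)) / ENNReal.ofReal (Real.log (1 / D)) :=
          ENNReal.ofReal_div_of_pos hL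
      _ ≤ rdFun μX ρ (D ^ k) / ENNReal.ofReal (Real.log (1 / D)) :=
          ENNReal.div_le_div_right hrd _
  have htend : Tendsto (fun D : ℝ => ENNReal.ofReal (m + C₀ / Real.log (1 / D)))
      (𝓝[>] (0:ℝ)) (𝓝 (ENNReal.ofReal m)) := by
    apply ENNReal.tendsto_ofReal
    have hLtop : Tendsto (fun D : ℝ => Real.log (1 / D)) (𝓝[>] (0:ℝ)) atTop := by
      have h1 : Tendsto (fun D : ℝ => 1 / D) (𝓝[>] (0:ℝ)) atTop := by
        simpa [one_div] using tendsto_inv_nhdsGT_zero (𝕜 := ℝ)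
      exact Real.tendsto_log_atTop.comp h1
    have h2 : Tendsto (fun D : ℝ => C₀ / Real.log (1 / D)) (𝓝[>] (0:ℝ)) (𝓝 0) :=
      Tendsto.div_atTop tendsto_const_nhds hLtop
    simpa using tendsto_const_nhds.add h2
  calc ENNReal.ofReal m
      = liminf (fun D : ℝ => ENNReal.ofReal (m + C₀ / Real.log (1 / D))) (𝓝[>] (0:ℝ)) :=
        (htend.liminf_eq).symm
    _ ≤ liminf (fun D : ℝ => rdFun μX ρ (D ^ k) / ENNReal.ofReal (Real.log (1 / D)))
        (𝓝[>] (0:ℝ)) := liminf_le_liminf hbound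
end
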